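/- arXiv:math/0405026 — 4 statements merged into one kernel-verified Lean document; each statement's English description precedes it below -/
import Mathlib

section
/- Let a ∈ ℝ^12 and let P(X,Y,Z) = Z²·p(X/Z, Y/Z), Q(X,Y,Z) = Z²·q(X/Z, Y/Z) be the homogenizations of p and q. Then for every (X0, Y0, Z0) ∈ ℂ³ with P(X0,Y0,Z0) = 0 and Q(X0,Y0,Z0) = 0 (in particular for every common zero, including points with Z0 = 0), one has μ4(a, X0, Y0) = 0, where μ4 is evaluated by extending scalars to ℂ. -/
open MvPolynomial Finset

noncomputable section

namespace QSinf

/-!  Coefficient conventions: for `a : Fin 12 → ℝ`,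
`a 0 = a00, a 1 = a10, a 2 = a01, a 3 = a20, a 4 = a11, a 5 = a02,
 a 6 = b00, a 7 = b10, a 8 = b01, a 9 = b20, a 10 = b11, a 11 = b02`,
so that `p = a00 + a10*x + a01*y + a20*x^2 + 2*a11*x*y + a02*y^2` and
`q = b00 + b10*x + b01*y + b20*x^2 + 2*b11*x*y + b02*y^2`. -/

/-- linear part of `p` -/
def p1f (a : Fin 12 → ℝ) (x y : ℝ) : ℝ := a 1 * x + a 2 * y
/-- linear part of `q` -/
def q1f (a : Fin 12 → ℝ) (x y : ℝ) : ℝ := a 7 * x + a 8 * y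
/-- quadratic part of `p` -/
def p2f (a : Fin 12 → ℝ) (x y : ℝ) : ℝ := a 3 * x ^ 2 + 2 * a 4 * x * y + a 5 * y ^ 2
/-- quadratic part of `q` -/
def q2f (a : Fin 12 → ℝ) (x y : ℝ) : ℝ := a 9 * x ^ 2 + 2 * a 10 * x * y + a 11 * y ^ 2
/-- the polynomial `p` -/
def pf (a : Fin 12 → ℝ) (x y : ℝ) : ℝ := a 0 + p1f a x y + p2f a x y
/-- the polynomial `q` -/
def qf (a : Fin 12 → ℝ) (x y : ℝ) : ℝ := a 6 + q1f a x y + q2f a x y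

/-- the invariant μ₀ -/
def mu0f (a : Fin 12 → ℝ) : ℝ :=
  (a 3 * a 11 - a 5 * a 9) ^ 2 - 4 * (a 3 * a 10 - a 4 * a 9) * (a 4 * a 11 - a 5 * a 10)

/-- the comitant `K`, the Jacobian of `(p₂, q₂)` -/
def Kf (a : Fin 12 → ℝ) (x y : ℝ) : ℝ :=
  (2 * a 3 * x + 2 * a 4 * y) * (2 * a 10 * x + 2 * a 11 * y)
    - (2 * a 4 * x + 2 * a 5 * y) * (2 * a 9 * x + 2 * a 10 * y)

/-- the comitant `H`: minus the discriminant (in `x²,xy,y²`-coefficients) of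
`α·p₂ + β·q₂` evaluated at `α = y`, `β = -x` -/
def Hf (a : Fin 12 → ℝ) (x y : ℝ) : ℝ :=
  -((2 * (a 4 * y - a 10 * x)) ^ 2 - 4 * (a 3 * y - a 9 * x) * (a 5 * y - a 11 * x))

/-- the comitant `C₂ = y·p₂ - x·q₂` -/
def C2f (a : Fin 12 → ℝ) (x y : ℝ) : ℝ := y * p2f a x y - x * q2f a x y

/-- coefficient of `x³` in `C₂` -/
def cc0 (a : Fin 12 → ℝ) : ℝ := -(a 9)
/-- coefficient of `x²y` in `C₂` -/
def cc1 (a : Fin 12 → ℝ) : ℝ := a 3 - 2 * a 10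
/-- coefficient of `xy²` in `C₂` -/
def cc2 (a : Fin 12 → ℝ) : ℝ := 2 * a 4 - a 11
/-- coefficient of `y³` in `C₂` -/
def cc3 (a : Fin 12 → ℝ) : ℝ := a 5

/-- the invariant η, the discriminant of the binary cubic `C₂` -/
def etaf (a : Fin 12 → ℝ) : ℝ :=
  (cc1 a) ^ 2 * (cc2 a) ^ 2 - 4 * cc0 a * (cc2 a) ^ 3 - 4 * (cc1 a) ^ 3 * cc3 a
    + 18 * cc0 a * cc1 a * cc2 a * cc3 a - 27 * (cc0 a) ^ 2 * (cc3 a) ^ 2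

/-- the comitant `M`, twice the Hessian of `C₂` -/
def Mf (a : Fin 12 → ℝ) (x y : ℝ) : ℝ :=
  2 * ((6 * cc0 a * x + 2 * cc1 a * y) * (2 * cc2 a * x + 6 * cc3 a * y)
    - (2 * cc1 a * x + 2 * cc2 a * y) ^ 2)

/-- the comitant `L = 2K - 4H - M` -/
def Lf (a : Fin 12 → ℝ) (x y : ℝ) : ℝ := 2 * Kf a x y - 4 * Hf a x y - Mf a x y
/-- the comitant `N = K + H` -/
def Nf (a : Fin 12 → ℝ) (x y : ℝ) : ℝ := Kf a x y + Hf a x y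
/-- the comitant `R = L + 8K` -/
def Rf (a : Fin 12 → ℝ) (x y : ℝ) : ℝ := Lf a x y + 8 * Kf a x y
/-- the comitant `K₁ = p₁q₂ - p₂q₁` -/
def K1f (a : Fin 12 → ℝ) (x y : ℝ) : ℝ := p1f a x y * q2f a x y - p2f a x y * q1f a x y

/-- `p₂` as a polynomial in `ℂ[x,y]` -/
def p2C (a : Fin 12 → ℝ) : MvPolynomial (Fin 2) ℂ :=
  C (a 3 : ℂ) * X 0 ^ 2 + C (2 * a 4 : ℂ) * X 0 * X 1 + C (a 5 : ℂ) * X 1 ^ 2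
/-- `q₂` as a polynomial in `ℂ[x,y]` -/
def q2C (a : Fin 12 → ℝ) : MvPolynomial (Fin 2) ℂ :=
  C (a 9 : ℂ) * X 0 ^ 2 + C (2 * a 10 : ℂ) * X 0 * X 1 + C (a 11 : ℂ) * X 1 ^ 2

/-- `d` is a greatest common divisor of `p` and `q` -/
def IsGcdOf (d p q : MvPolynomial (Fin 2) ℂ) : Prop :=
  d ∣ p ∧ d ∣ q ∧ ∀ e : MvPolynomial (Fin 2) ℂ, e ∣ p → e ∣ q → e ∣ d

/-- the cubic form `C₂` regarded over `ℂ` -/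
def C2c (a : Fin 12 → ℝ) (x y : ℂ) : ℂ :=
  (cc0 a : ℂ) * x ^ 3 + (cc1 a : ℂ) * x ^ 2 * y + (cc2 a : ℂ) * x * y ^ 2 + (cc3 a : ℂ) * y ^ 3

/-- the complex linear form `b·x + c·y` is proportional to a real linear form -/
def RealProp (b c : ℂ) : Prop := ∃ (l : ℂ) (r s : ℝ), l ≠ 0 ∧ b = l * (r : ℂ) ∧ c = l * (s : ℂ)

/-- coefficient vector of the translated system `p(x+α, y+β), q(x+α, y+β)` -/
def rT (a : Fin 12 → ℝ) (α β : ℝ) : Fin 12 → ℝ :=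
  ![a 0 + a 1 * α + a 2 * β + a 3 * α ^ 2 + 2 * a 4 * α * β + a 5 * β ^ 2,
    a 1 + 2 * a 3 * α + 2 * a 4 * β,
    a 2 + 2 * a 4 * α + 2 * a 5 * β,
    a 3, a 4, a 5,
    a 6 + a 7 * α + a 8 * β + a 9 * α ^ 2 + 2 * a 10 * α * β + a 11 * β ^ 2,
    a 7 + 2 * a 9 * α + 2 * a 10 * β,
    a 8 + 2 * a 10 * α + 2 * a 11 * β,
    a 9, a 10, a 11]

/-- binary forms in `x = X 0`, `y = X 1` with real coefficients -/
abbrev R2 := MvPolynomial (Fin 2) ℝ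

/-- ∂/∂x -/
def pdx (f : R2) : R2 := pderiv 0 f
/-- ∂/∂y -/
def pdy (f : R2) : R2 := pderiv 1 f
/-- the Jacobian of two binary forms -/
def jacobP (f g : R2) : R2 := pdx f * pdy g - pdy f * pdx g
/-- the second transvectant `(f,g)⁽²⁾` -/
def transv2 (f g : R2) : R2 :=
  pdx (pdx f) * pdy (pdy g) - 2 * pdx (pdy f) * pdx (pdy g) + pdy (pdy f) * pdx (pdx g)

/-- `p₁` as a binary form -/
def p1P (a : Fin 12 → ℝ) : R2 := C (a 1) * X 0 + C (a 2) * X 1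
/-- `q₁` as a binary form -/
def q1P (a : Fin 12 → ℝ) : R2 := C (a 7) * X 0 + C (a 8) * X 1
/-- `p₂` as a binary form -/
def p2P (a : Fin 12 → ℝ) : R2 := C (a 3) * X 0 ^ 2 + C (2 * a 4) * X 0 * X 1 + C (a 5) * X 1 ^ 2
/-- `q₂` as a binary form -/
def q2P (a : Fin 12 → ℝ) : R2 := C (a 9) * X 0 ^ 2 + C (2 * a 10) * X 0 * X 1 + C (a 11) * X 1 ^ 2
/-- `C₀ = y·p₀ - x·q₀` -/
def C0P (a : Fin 12 → ℝ) : R2 := C (a 0) * X 1 - C (a 6) * X 0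
/-- `C₁ = y·p₁ - x·q₁` -/
def C1P (a : Fin 12 → ℝ) : R2 := X 1 * p1P a - X 0 * q1P a
/-- `C₂ = y·p₂ - x·q₂` -/
def C2P (a : Fin 12 → ℝ) : R2 := X 1 * p2P a - X 0 * q2P a
/-- the comitant `K` as a binary form -/
def KP (a : Fin 12 → ℝ) : R2 := jacobP (p2P a) (q2P a)
/-- the comitant `M` (twice the Hessian of `C₂`) as a binary form -/
def MP (a : Fin 12 → ℝ) : R2 :=
  2 * (pdx (pdx (C2P a)) * pdy (pdy (C2P a)) - (pdx (pdy (C2P a))) ^ 2)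
/-- the comitant `H` as a binary form -/
def HP (a : Fin 12 → ℝ) : R2 :=
  -((2 * (C (a 4) * X 1 - C (a 10) * X 0)) ^ 2
    - 4 * (C (a 3) * X 1 - C (a 9) * X 0) * (C (a 5) * X 1 - C (a 11) * X 0))
/-- the comitant `L = 2K - 4H - M` as a binary form -/
def LP (a : Fin 12 → ℝ) : R2 := 2 * KP a - 4 * HP a - MP a
/-- the comitant `K₁ = p₁q₂ - p₂q₁` as a binary form -/
def K1P (a : Fin 12 → ℝ) : R2 := p1P a * q2P a - p2P a * q1P a
/-- the invariant `D₁ = a10 + b01` -/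
def D1v (a : Fin 12 → ℝ) : ℝ := a 1 + a 8
/-- the comitant `D₂ = ∂p₂/∂x + ∂q₂/∂y` -/
def D2P (a : Fin 12 → ℝ) : R2 := pdx (p2P a) + pdy (q2P a)
/-- `J₁ = Jacob(C₀, D₂)` -/
def J1P (a : Fin 12 → ℝ) : R2 := jacobP (C0P a) (D2P a)
/-- `J₂ = Jacob(C₀, C₂)` -/
def J2P (a : Fin 12 → ℝ) : R2 := jacobP (C0P a) (C2P a)
/-- `J₃ = Discrim(C₁)`: for `C₁ = -b10·x² + (a10-b01)·xy + a01·y²` this is `B² - 4AC` -/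
def J3v (a : Fin 12 → ℝ) : ℝ := (a 1 - a 8) ^ 2 + 4 * a 7 * a 2
/-- `J₄ = Jacob(C₁, D₂)` -/
def J4P (a : Fin 12 → ℝ) : R2 := jacobP (C1P a) (D2P a)
/-- the invariant `κ = (M,K)⁽²⁾` (a constant binary form) -/
def kappaP (a : Fin 12 → ℝ) : R2 := transv2 (MP a) (KP a)
/-- the invariant `κ₁ = (M,C₁)⁽²⁾` (a constant binary form) -/
def kappa1P (a : Fin 12 → ℝ) : R2 := transv2 (MP a) (C1P a)
/-- the invariant `κ₂ = -J₁` -/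
def kappa2f (a : Fin 12 → ℝ) : ℝ :=
  -((-(a 6)) * (2 * a 4 + 2 * a 11) - a 0 * (2 * a 3 + 2 * a 10))
/-- `ζ = M - 2K` -/
def zetaP (a : Fin 12 → ℝ) : R2 := MP a - 2 * KP a
/-- the comitant `K₂ = 4·Jacob(J₂,ζ) + 3·Jacob(C₁,ζ)·D₁ - ζ·(16J₁ + 3J₃ + 3D₁²)` -/
def K2P (a : Fin 12 → ℝ) : R2 :=
  4 * jacobP (J2P a) (zetaP a) + C (3 * D1v a) * jacobP (C1P a) (zetaP a)
    - zetaP a * (16 * J1P a + C (3 * J3v a + 3 * (D1v a) ^ 2))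
/-- the comitant `K₃ = 2C₂²(2J₁-3J₃) + C₂(3C₀K - 2C₁J₄) + 2K₁(C₁D₂ + 3K₁)` -/
def K3P (a : Fin 12 → ℝ) : R2 :=
  2 * (C2P a) ^ 2 * (2 * J1P a - C (3 * J3v a))
    + C2P a * (3 * C0P a * KP a - 2 * C1P a * J4P a)
    + 2 * K1P a * (C1P a * D2P a + 3 * K1P a)

/-- polynomials in the 12 coefficient variables (indices 0–11) and `x = X 12`, `y = X 13` -/
abbrev R14 := MvPolynomial (Fin 14) ℝ

/-- the differential operator `L₁` -/
def L1op (f : R14) : R14 :=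
  2 * X 0 * pderiv 1 f + X 1 * pderiv 3 f + C (1/2 : ℝ) * X 2 * pderiv 4 f
    + 2 * X 6 * pderiv 7 f + X 7 * pderiv 9 f + C (1/2 : ℝ) * X 8 * pderiv 10 f
/-- the differential operator `L₂` -/
def L2op (f : R14) : R14 :=
  2 * X 0 * pderiv 2 f + X 2 * pderiv 5 f + C (1/2 : ℝ) * X 1 * pderiv 4 f
    + 2 * X 6 * pderiv 8 f + X 8 * pderiv 11 f + C (1/2 : ℝ) * X 7 * pderiv 10 f
/-- the differential operator `𝓛 = x·L₂ - y·L₁` -/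
def LLop (f : R14) : R14 := X 12 * L2op f - X 13 * L1op f

/-- `μ₀` as an element of `ℝ[a₀₀,…,b₀₂,x,y]` -/
def mu0P : R14 :=
  (X 3 * X 11 - X 5 * X 9) ^ 2 - 4 * (X 3 * X 10 - X 4 * X 9) * (X 4 * X 11 - X 5 * X 10)

/-- `μᵢ = 𝓛⁽ⁱ⁾(μ₀)/i!` -/
def muP (i : ℕ) : R14 := ((i.factorial : ℝ)⁻¹) • (LLop^[i] mu0P)

/-- evaluation point assigning the coefficients `a` and the values `x`, `y` -/
def evalAt (a : Fin 12 → ℝ) (x y : ℝ) : Fin 14 → ℝ := fun i =>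
  if h : (i : ℕ) < 12 then a ⟨(i : ℕ), h⟩ else if (i : ℕ) = 12 then x else y

/-- the value `μᵢ(a, x, y)` -/
def muf (i : ℕ) (a : Fin 12 → ℝ) (x y : ℝ) : ℝ := eval (evalAt a x y) (muP i)

/-- complex evaluation point: coefficients `a` (cast to `ℂ`) and complex values `x`, `y` -/
def evalAtC (a : Fin 12 → ℝ) (x y : ℂ) : Fin 14 → ℂ := fun i =>
  if h : (i : ℕ) < 12 then ((a ⟨(i : ℕ), h⟩ : ℝ) : ℂ) else if (i : ℕ) = 12 then x else y

/-- the value of `μᵢ` extended to complex arguments -/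
def mufC (i : ℕ) (a : Fin 12 → ℝ) (x y : ℂ) : ℂ := aeval (evalAtC a x y) (muP i)

/-- the homogenization `P(X,Y,Z) = Z²·p(X/Z,Y/Z)` over `ℂ` -/
def PfC (a : Fin 12 → ℝ) (Xv Yv Zv : ℂ) : ℂ :=
  (a 0 : ℂ) * Zv ^ 2 + ((a 1 : ℂ) * Xv + (a 2 : ℂ) * Yv) * Zv
    + ((a 3 : ℂ) * Xv ^ 2 + 2 * (a 4 : ℂ) * Xv * Yv + (a 5 : ℂ) * Yv ^ 2)
/-- the homogenization `Q(X,Y,Z) = Z²·q(X/Z,Y/Z)` over `ℂ` -/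
def QfC (a : Fin 12 → ℝ) (Xv Yv Zv : ℂ) : ℂ :=
  (a 6 : ℂ) * Zv ^ 2 + ((a 7 : ℂ) * Xv + (a 8 : ℂ) * Yv) * Zv
    + ((a 9 : ℂ) * Xv ^ 2 + 2 * (a 10 : ℂ) * Xv * Yv + (a 11 : ℂ) * Yv ^ 2)

/-- `b` is the coefficient vector `r_g(a)` of the system transformed by
`g ∈ GL(2,ℝ)` with matrix `m` and inverse matrix `n`:
`(p̃,q̃)(x̃,ỹ) = m·(p,q)(g⁻¹(x̃,ỹ))`. -/
def IsTransformed (m n : Matrix (Fin 2) (Fin 2) ℝ) (a b : Fin 12 → ℝ) : Prop :=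
  m * n = 1 ∧ ∀ x y : ℝ,
    pf b x y = m 0 0 * pf a (n 0 0 * x + n 0 1 * y) (n 1 0 * x + n 1 1 * y)
               + m 0 1 * qf a (n 0 0 * x + n 0 1 * y) (n 1 0 * x + n 1 1 * y)
    ∧ qf b x y = m 1 0 * pf a (n 0 0 * x + n 0 1 * y) (n 1 0 * x + n 1 1 * y)
               + m 1 1 * qf a (n 0 0 * x + n 0 1 * y) (n 1 0 * x + n 1 1 * y)

/-- `(P2, Q2)` is the pair of degree-2 homogeneous parts of the system transformed by
`g ∈ GL(2,ℝ)` with matrix `m` and inverse matrix `n`. -/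
def Quad2Transformed (m n : Matrix (Fin 2) (Fin 2) ℝ) (a : Fin 12 → ℝ)
    (P2 Q2 : ℝ → ℝ → ℝ) : Prop :=
  m * n = 1 ∧ ∀ x y : ℝ,
    P2 x y = m 0 0 * p2f a (n 0 0 * x + n 0 1 * y) (n 1 0 * x + n 1 1 * y)
               + m 0 1 * q2f a (n 0 0 * x + n 0 1 * y) (n 1 0 * x + n 1 1 * y)
    ∧ Q2 x y = m 1 0 * p2f a (n 0 0 * x + n 0 1 * y) (n 1 0 * x + n 1 1 * y)
               + m 1 1 * q2f a (n 0 0 * x + n 0 1 * y) (n 1 0 * x + n 1 1 * y)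


namespace QSinfAux

open QSinf

lemma pderiv_ofNat' (i : Fin 14) (n : ℕ) [n.AtLeastTwo] :
    pderiv i (no_index (OfNat.ofNat n) : R14) = 0 := by
  rw [← map_ofNat (C : ℝ →+* R14) n]; exact pderiv_C

lemma pderiv_X_apply (i j : Fin 14) : pderiv i (X j : R14) = if j = i then 1 else 0 := by
  split
  · subst ‹_›; exact pderiv_X_self j
  · exact pderiv_X_of_ne ‹_›

lemma twoLL (f : R14) : 2 * LLop f =
    X 12 * (4 * X 0 * pderiv 2 f + X 1 * pderiv 4 f + 2 * X 2 * pderiv 5 f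
      + 4 * X 6 * pderiv 8 f + X 7 * pderiv 10 f + 2 * X 8 * pderiv 11 f)
    - X 13 * (4 * X 0 * pderiv 1 f + 2 * X 1 * pderiv 3 f + X 2 * pderiv 4 f
      + 4 * X 6 * pderiv 7 f + 2 * X 7 * pderiv 9 f + X 8 * pderiv 10 f) := by
  have h : (C (1/2 : ℝ) : R14) * 2 = 1 := by
    rw [show (2 : R14) = C (2 : ℝ) from (map_ofNat (C : ℝ →+* R14) 2).symm, ← map_mul]
    norm_num
  unfold LLop L1op L2op
  linear_combination (X 12 * X 1 * pderiv 4 f + X 12 * X 7 * pderiv 10 f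
    - X 13 * X 2 * pderiv 4 f - X 13 * X 8 * pderiv 10 f) * h

local instance : Mul R14 := inferInstance
local instance : Add R14 := inferInstance
local instance : Neg R14 := inferInstance
local instance : Monoid R14 := inferInstance
local instance : NatCast R14 := inferInstance

def M1c0 : R14 :=
  (-4) * X 5 ^ 2 * X 7 * X 9 * X 13 + (4) * X 4 * X 5 * X 8 * X 9 * X 13 + (8) * X 4 * X 5 * X 7 * X 10 * X 13 + (-4) * X 4 * X 5 * X 7 * X 9 * X 12 + (8) * X 4 ^ 2 * X 8 * X 9 * X 12 + (-8) * X 4 ^ 2 * X 7 * X 11 * X 13 + (-8) * X 3 * X 5 * X 8 * X 10 * X 13 + (-4) * X 3 * X 5 * X 8 * X 9 * X 12 + (4) * X 3 * X 5 * X 7 * X 11 * X 13 + (8) * X 3 * X 5 * X 7 * X 10 * X 12 + (4) * X 3 * X 4 * X 8 * X 11 * X 13 + (-8) * X 3 * X 4 * X 8 * X 10 * X 12 + (-4) * X 3 * X 4 * X 7 * X 11 * X 12 + (4) * X 3 ^ 2 * X 8 * X 11 * X 12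

def M1c1 : R14 :=
  (4) * X 2 * X 5 * X 9 * X 10 * X 13 + (4) * X 2 * X 5 * X 9 ^ 2 * X 12 + (-8) * X 2 * X 4 * X 9 * X 11 * X 13 + (-8) * X 2 * X 4 * X 9 * X 10 * X 12 + (4) * X 2 * X 3 * X 10 * X 11 * X 13 + (8) * X 2 * X 3 * X 10 ^ 2 * X 12 + (-4) * X 2 * X 3 * X 9 * X 11 * X 12 + (-8) * X 1 * X 5 * X 10 ^ 2 * X 13 + (4) * X 1 * X 5 * X 9 * X 11 * X 13 + (-4) * X 1 * X 5 * X 9 * X 10 * X 12 + (8) * X 1 * X 4 * X 10 * X 11 * X 13 + (8) * X 1 * X 4 * X 9 * X 11 * X 12 + (-4) * X 1 * X 3 * X 11 ^ 2 * X 13 + (-4) * X 1 * X 3 * X 10 * X 11 * X 12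

def M1 : R14 := M1c0 + M1c1

def M2c0 : R14 :=
  (8) * X 5 ^ 2 * X 7 ^ 2 * X 13 ^ 2 + (16) * X 5 ^ 2 * X 6 * X 9 * X 13 ^ 2 + (-16) * X 4 * X 5 * X 7 * X 8 * X 13 ^ 2 + (16) * X 4 * X 5 * X 7 ^ 2 * X 12 * X 13 + (-32) * X 4 * X 5 * X 6 * X 10 * X 13 ^ 2 + (32) * X 4 * X 5 * X 6 * X 9 * X 12 * X 13 + (-32) * X 4 ^ 2 * X 7 * X 8 * X 12 * X 13 + (32) * X 4 ^ 2 * X 6 * X 11 * X 13 ^ 2 + (32) * X 4 ^ 2 * X 6 * X 9 * X 12 ^ 2 + (8) * X 3 * X 5 * X 8 ^ 2 * X 13 ^ 2 + (8) * X 3 * X 5 * X 7 ^ 2 * X 12 ^ 2 + (-16) * X 3 * X 5 * X 6 * X 11 * X 13 ^ 2 + (-64) * X 3 * X 5 * X 6 * X 10 * X 12 * X 13 + (-16) * X 3 * X 5 * X 6 * X 9 * X 12 ^ 2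

def M2c1 : R14 :=
  (16) * X 3 * X 4 * X 8 ^ 2 * X 12 * X 13 + (-16) * X 3 * X 4 * X 7 * X 8 * X 12 ^ 2 + (32) * X 3 * X 4 * X 6 * X 11 * X 12 * X 13 + (-32) * X 3 * X 4 * X 6 * X 10 * X 12 ^ 2 + (8) * X 3 ^ 2 * X 8 ^ 2 * X 12 ^ 2 + (16) * X 3 ^ 2 * X 6 * X 11 * X 12 ^ 2 + (-8) * X 2 * X 5 * X 8 * X 9 * X 13 ^ 2 + (-16) * X 2 * X 5 * X 7 * X 10 * X 13 ^ 2 + (-24) * X 2 * X 5 * X 7 * X 9 * X 12 * X 13 + (-16) * X 2 * X 4 * X 8 * X 9 * X 12 * X 13 + (32) * X 2 * X 4 * X 7 * X 11 * X 13 ^ 2 + (32) * X 2 * X 4 * X 7 * X 10 * X 12 * X 13 + (-16) * X 2 * X 4 * X 7 * X 9 * X 12 ^ 2 + (-8) * X 2 * X 3 * X 8 * X 11 * X 13 ^ 2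

def M2c2 : R14 :=
  (-16) * X 2 * X 3 * X 8 * X 10 * X 12 * X 13 + (-16) * X 2 * X 3 * X 8 * X 9 * X 12 ^ 2 + (24) * X 2 * X 3 * X 7 * X 11 * X 12 * X 13 + (32) * X 2 * X 3 * X 7 * X 10 * X 12 ^ 2 + (8) * X 2 ^ 2 * X 9 * X 11 * X 13 ^ 2 + (16) * X 2 ^ 2 * X 9 * X 10 * X 12 * X 13 + (8) * X 2 ^ 2 * X 9 ^ 2 * X 12 ^ 2 + (32) * X 1 * X 5 * X 8 * X 10 * X 13 ^ 2 + (24) * X 1 * X 5 * X 8 * X 9 * X 12 * X 13 + (-16) * X 1 * X 5 * X 7 * X 11 * X 13 ^ 2 + (-16) * X 1 * X 5 * X 7 * X 10 * X 12 * X 13 + (-8) * X 1 * X 5 * X 7 * X 9 * X 12 ^ 2 + (-16) * X 1 * X 4 * X 8 * X 11 * X 13 ^ 2 + (32) * X 1 * X 4 * X 8 * X 10 * X 12 * X 13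

def M2c3 : R14 :=
  (32) * X 1 * X 4 * X 8 * X 9 * X 12 ^ 2 + (-16) * X 1 * X 4 * X 7 * X 11 * X 12 * X 13 + (-24) * X 1 * X 3 * X 8 * X 11 * X 12 * X 13 + (-16) * X 1 * X 3 * X 8 * X 10 * X 12 ^ 2 + (-8) * X 1 * X 3 * X 7 * X 11 * X 12 ^ 2 + (-16) * X 1 * X 2 * X 10 * X 11 * X 13 ^ 2 + (-32) * X 1 * X 2 * X 10 ^ 2 * X 12 * X 13 + (-16) * X 1 * X 2 * X 9 * X 10 * X 12 ^ 2 + (8) * X 1 ^ 2 * X 11 ^ 2 * X 13 ^ 2 + (16) * X 1 ^ 2 * X 10 * X 11 * X 12 * X 13 + (8) * X 1 ^ 2 * X 9 * X 11 * X 12 ^ 2 + (32) * X 0 * X 5 * X 10 ^ 2 * X 13 ^ 2 + (-16) * X 0 * X 5 * X 9 * X 11 * X 13 ^ 2 + (32) * X 0 * X 5 * X 9 * X 10 * X 12 * X 13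

def M2c4 : R14 :=
  (16) * X 0 * X 5 * X 9 ^ 2 * X 12 ^ 2 + (-32) * X 0 * X 4 * X 10 * X 11 * X 13 ^ 2 + (-64) * X 0 * X 4 * X 9 * X 11 * X 12 * X 13 + (-32) * X 0 * X 4 * X 9 * X 10 * X 12 ^ 2 + (16) * X 0 * X 3 * X 11 ^ 2 * X 13 ^ 2 + (32) * X 0 * X 3 * X 10 * X 11 * X 12 * X 13 + (32) * X 0 * X 3 * X 10 ^ 2 * X 12 ^ 2 + (-16) * X 0 * X 3 * X 9 * X 11 * X 12 ^ 2

def M2 : R14 := M2c0 + M2c1 + M2c2 + M2c3 + M2c4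

def M3c0 : R14 :=
  (-96) * X 5 ^ 2 * X 6 * X 7 * X 13 ^ 3 + (96) * X 4 * X 5 * X 6 * X 8 * X 13 ^ 3 + (-288) * X 4 * X 5 * X 6 * X 7 * X 12 * X 13 ^ 2 + (192) * X 4 ^ 2 * X 6 * X 8 * X 12 * X 13 ^ 2 + (-192) * X 4 ^ 2 * X 6 * X 7 * X 12 ^ 2 * X 13 + (96) * X 3 * X 5 * X 6 * X 8 * X 12 * X 13 ^ 2 + (-96) * X 3 * X 5 * X 6 * X 7 * X 12 ^ 2 * X 13 + (288) * X 3 * X 4 * X 6 * X 8 * X 12 ^ 2 * X 13 + (-96) * X 3 * X 4 * X 6 * X 7 * X 12 ^ 3 + (96) * X 3 ^ 2 * X 6 * X 8 * X 12 ^ 3 + (48) * X 2 * X 5 * X 7 * X 8 * X 13 ^ 3 + (48) * X 2 * X 5 * X 7 ^ 2 * X 12 * X 13 ^ 2 + (96) * X 2 * X 5 * X 6 * X 10 * X 13 ^ 3 + (96) * X 2 * X 5 * X 6 * X 9 * X 12 * X 13 ^ 2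

def M3c1 : R14 :=
  (96) * X 2 * X 4 * X 7 * X 8 * X 12 * X 13 ^ 2 + (96) * X 2 * X 4 * X 7 ^ 2 * X 12 ^ 2 * X 13 + (-192) * X 2 * X 4 * X 6 * X 11 * X 13 ^ 3 + (-192) * X 2 * X 4 * X 6 * X 10 * X 12 * X 13 ^ 2 + (48) * X 2 * X 3 * X 7 * X 8 * X 12 ^ 2 * X 13 + (48) * X 2 * X 3 * X 7 ^ 2 * X 12 ^ 3 + (-192) * X 2 * X 3 * X 6 * X 11 * X 12 * X 13 ^ 2 + (-288) * X 2 * X 3 * X 6 * X 10 * X 12 ^ 2 * X 13 + (-96) * X 2 * X 3 * X 6 * X 9 * X 12 ^ 3 + (-48) * X 2 ^ 2 * X 7 * X 11 * X 13 ^ 3 + (-96) * X 2 ^ 2 * X 7 * X 10 * X 12 * X 13 ^ 2 + (-48) * X 2 ^ 2 * X 7 * X 9 * X 12 ^ 2 * X 13 + (-48) * X 1 * X 5 * X 8 ^ 2 * X 13 ^ 3 + (-48) * X 1 * X 5 * X 7 * X 8 * X 12 * X 13 ^ 2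

def M3c2 : R14 :=
  (96) * X 1 * X 5 * X 6 * X 11 * X 13 ^ 3 + (288) * X 1 * X 5 * X 6 * X 10 * X 12 * X 13 ^ 2 + (192) * X 1 * X 5 * X 6 * X 9 * X 12 ^ 2 * X 13 + (-96) * X 1 * X 4 * X 8 ^ 2 * X 12 * X 13 ^ 2 + (-96) * X 1 * X 4 * X 7 * X 8 * X 12 ^ 2 * X 13 + (192) * X 1 * X 4 * X 6 * X 10 * X 12 ^ 2 * X 13 + (192) * X 1 * X 4 * X 6 * X 9 * X 12 ^ 3 + (-48) * X 1 * X 3 * X 8 ^ 2 * X 12 ^ 2 * X 13 + (-48) * X 1 * X 3 * X 7 * X 8 * X 12 ^ 3 + (-96) * X 1 * X 3 * X 6 * X 11 * X 12 ^ 2 * X 13 + (-96) * X 1 * X 3 * X 6 * X 10 * X 12 ^ 3 + (48) * X 1 * X 2 * X 8 * X 11 * X 13 ^ 3 + (96) * X 1 * X 2 * X 8 * X 10 * X 12 * X 13 ^ 2 + (48) * X 1 * X 2 * X 8 * X 9 * X 12 ^ 2 * X 13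

def M3c3 : R14 :=
  (-48) * X 1 * X 2 * X 7 * X 11 * X 12 * X 13 ^ 2 + (-96) * X 1 * X 2 * X 7 * X 10 * X 12 ^ 2 * X 13 + (-48) * X 1 * X 2 * X 7 * X 9 * X 12 ^ 3 + (48) * X 1 ^ 2 * X 8 * X 11 * X 12 * X 13 ^ 2 + (96) * X 1 ^ 2 * X 8 * X 10 * X 12 ^ 2 * X 13 + (48) * X 1 ^ 2 * X 8 * X 9 * X 12 ^ 3 + (-192) * X 0 * X 5 * X 8 * X 10 * X 13 ^ 3 + (-192) * X 0 * X 5 * X 8 * X 9 * X 12 * X 13 ^ 2 + (96) * X 0 * X 5 * X 7 * X 11 * X 13 ^ 3 + (-96) * X 0 * X 5 * X 7 * X 9 * X 12 ^ 2 * X 13 + (96) * X 0 * X 4 * X 8 * X 11 * X 13 ^ 3 + (-192) * X 0 * X 4 * X 8 * X 10 * X 12 * X 13 ^ 2 + (-288) * X 0 * X 4 * X 8 * X 9 * X 12 ^ 2 * X 13 + (288) * X 0 * X 4 * X 7 * X 11 * X 12 * X 13 ^ 2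

def M3c4 : R14 :=
  (192) * X 0 * X 4 * X 7 * X 10 * X 12 ^ 2 * X 13 + (-96) * X 0 * X 4 * X 7 * X 9 * X 12 ^ 3 + (96) * X 0 * X 3 * X 8 * X 11 * X 12 * X 13 ^ 2 + (-96) * X 0 * X 3 * X 8 * X 9 * X 12 ^ 3 + (192) * X 0 * X 3 * X 7 * X 11 * X 12 ^ 2 * X 13 + (192) * X 0 * X 3 * X 7 * X 10 * X 12 ^ 3 + (96) * X 0 * X 2 * X 10 * X 11 * X 13 ^ 3 + (192) * X 0 * X 2 * X 10 ^ 2 * X 12 * X 13 ^ 2 + (96) * X 0 * X 2 * X 9 * X 11 * X 12 * X 13 ^ 2 + (288) * X 0 * X 2 * X 9 * X 10 * X 12 ^ 2 * X 13 + (96) * X 0 * X 2 * X 9 ^ 2 * X 12 ^ 3 + (-96) * X 0 * X 1 * X 11 ^ 2 * X 13 ^ 3 + (-288) * X 0 * X 1 * X 10 * X 11 * X 12 * X 13 ^ 2 + (-192) * X 0 * X 1 * X 10 ^ 2 * X 12 ^ 2 * X 13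

def M3c5 : R14 :=
  (-96) * X 0 * X 1 * X 9 * X 11 * X 12 ^ 2 * X 13 + (-96) * X 0 * X 1 * X 9 * X 10 * X 12 ^ 3

def M3 : R14 := M3c0 + M3c1 + M3c2 + M3c3 + M3c4 + M3c5

def M4c0 : R14 :=
  (384) * X 5 ^ 2 * X 6 ^ 2 * X 13 ^ 4 + (1536) * X 4 * X 5 * X 6 ^ 2 * X 12 * X 13 ^ 3 + (1536) * X 4 ^ 2 * X 6 ^ 2 * X 12 ^ 2 * X 13 ^ 2 + (768) * X 3 * X 5 * X 6 ^ 2 * X 12 ^ 2 * X 13 ^ 2 + (1536) * X 3 * X 4 * X 6 ^ 2 * X 12 ^ 3 * X 13 + (384) * X 3 ^ 2 * X 6 ^ 2 * X 12 ^ 4 + (-384) * X 2 * X 5 * X 6 * X 8 * X 13 ^ 4 + (-384) * X 2 * X 5 * X 6 * X 7 * X 12 * X 13 ^ 3 + (-768) * X 2 * X 4 * X 6 * X 8 * X 12 * X 13 ^ 3 + (-768) * X 2 * X 4 * X 6 * X 7 * X 12 ^ 2 * X 13 ^ 2 + (-384) * X 2 * X 3 * X 6 * X 8 * X 12 ^ 2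 * X 13 ^ 2 + (-384) * X 2 * X 3 * X 6 * X 7 * X 12 ^ 3 * X 13 + (384) * X 2 ^ 2 * X 6 * X 11 * X 13 ^ 4 + (768) * X 2 ^ 2 * X 6 * X 10 * X 12 * X 13 ^ 3

def M4c1 : R14 :=
  (384) * X 2 ^ 2 * X 6 * X 9 * X 12 ^ 2 * X 13 ^ 2 + (-384) * X 1 * X 5 * X 6 * X 8 * X 12 * X 13 ^ 3 + (-384) * X 1 * X 5 * X 6 * X 7 * X 12 ^ 2 * X 13 ^ 2 + (-768) * X 1 * X 4 * X 6 * X 8 * X 12 ^ 2 * X 13 ^ 2 + (-768) * X 1 * X 4 * X 6 * X 7 * X 12 ^ 3 * X 13 + (-384) * X 1 * X 3 * X 6 * X 8 * X 12 ^ 3 * X 13 + (-384) * X 1 * X 3 * X 6 * X 7 * X 12 ^ 4 + (768) * X 1 * X 2 * X 6 * X 11 * X 12 * X 13 ^ 3 + (1536) * X 1 * X 2 * X 6 * X 10 * X 12 ^ 2 * X 13 ^ 2 + (768) * X 1 * X 2 * X 6 * X 9 * X 12 ^ 3 * X 13 + (384) * X 1 ^ 2 * X 6 * X 11 * X 12 ^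 2 * X 13 ^ 2 + (768) * X 1 ^ 2 * X 6 * X 10 * X 12 ^ 3 * X 13 + (384) * X 1 ^ 2 * X 6 * X 9 * X 12 ^ 4 + (384) * X 0 * X 5 * X 8 ^ 2 * X 13 ^ 4

def M4c2 : R14 :=
  (768) * X 0 * X 5 * X 7 * X 8 * X 12 * X 13 ^ 3 + (384) * X 0 * X 5 * X 7 ^ 2 * X 12 ^ 2 * X 13 ^ 2 + (-768) * X 0 * X 5 * X 6 * X 11 * X 13 ^ 4 + (-1536) * X 0 * X 5 * X 6 * X 10 * X 12 * X 13 ^ 3 + (-768) * X 0 * X 5 * X 6 * X 9 * X 12 ^ 2 * X 13 ^ 2 + (768) * X 0 * X 4 * X 8 ^ 2 * X 12 * X 13 ^ 3 + (1536) * X 0 * X 4 * X 7 * X 8 * X 12 ^ 2 * X 13 ^ 2 + (768) * X 0 * X 4 * X 7 ^ 2 * X 12 ^ 3 * X 13 + (-1536) * X 0 * X 4 * X 6 * X 11 * X 12 * X 13 ^ 3 + (-3072) * X 0 * X 4 * X 6 * X 10 * X 12 ^ 2 * X 13 ^ 2 + (-1536) * X 0 * X 4 * X 6 * X 9 * X 12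 ^ 3 * X 13 + (384) * X 0 * X 3 * X 8 ^ 2 * X 12 ^ 2 * X 13 ^ 2 + (768) * X 0 * X 3 * X 7 * X 8 * X 12 ^ 3 * X 13 + (384) * X 0 * X 3 * X 7 ^ 2 * X 12 ^ 4

def M4c3 : R14 :=
  (-768) * X 0 * X 3 * X 6 * X 11 * X 12 ^ 2 * X 13 ^ 2 + (-1536) * X 0 * X 3 * X 6 * X 10 * X 12 ^ 3 * X 13 + (-768) * X 0 * X 3 * X 6 * X 9 * X 12 ^ 4 + (-384) * X 0 * X 2 * X 8 * X 11 * X 13 ^ 4 + (-768) * X 0 * X 2 * X 8 * X 10 * X 12 * X 13 ^ 3 + (-384) * X 0 * X 2 * X 8 * X 9 * X 12 ^ 2 * X 13 ^ 2 + (-384) * X 0 * X 2 * X 7 * X 11 * X 12 * X 13 ^ 3 + (-768) * X 0 * X 2 * X 7 * X 10 * X 12 ^ 2 * X 13 ^ 2 + (-384) * X 0 * X 2 * X 7 * X 9 * X 12 ^ 3 * X 13 + (-384) * X 0 * X 1 * X 8 * X 11 * X 12 * X 13 ^ 3 + (-768) * X 0 * X 1 * X 8 * X 10 * X 12 ^ 2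 * X 13 ^ 2 + (-384) * X 0 * X 1 * X 8 * X 9 * X 12 ^ 3 * X 13 + (-384) * X 0 * X 1 * X 7 * X 11 * X 12 ^ 2 * X 13 ^ 2 + (-768) * X 0 * X 1 * X 7 * X 10 * X 12 ^ 3 * X 13

def M4c4 : R14 :=
  (-384) * X 0 * X 1 * X 7 * X 9 * X 12 ^ 4 + (384) * X 0 ^ 2 * X 11 ^ 2 * X 13 ^ 4 + (1536) * X 0 ^ 2 * X 10 * X 11 * X 12 * X 13 ^ 3 + (1536) * X 0 ^ 2 * X 10 ^ 2 * X 12 ^ 2 * X 13 ^ 2 + (768) * X 0 ^ 2 * X 9 * X 11 * X 12 ^ 2 * X 13 ^ 2 + (1536) * X 0 ^ 2 * X 9 * X 10 * X 12 ^ 3 * X 13 + (384) * X 0 ^ 2 * X 9 ^ 2 * X 12 ^ 4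

def M4 : R14 := M4c0 + M4c1 + M4c2 + M4c3 + M4c4

set_option maxHeartbeats 4000000 in
lemma step1 : 2 * LLop QSinf.mu0P = M1 := by
  rw [twoLL]
  simp only [QSinf.mu0P, M1, M1c0, M1c1, map_sub, map_add, pderiv_mul, pderiv_pow, pderiv_X_apply,
    pderiv_C, pderiv_ofNat', map_neg, Fin.reduceEq, reduceIte, mul_zero, zero_mul,
    mul_one, one_mul, add_zero, zero_add, sub_zero, zero_sub, mul_neg, neg_neg, if_true]
  ring

set_option maxHeartbeats 4000000 in
lemma step2 : 2 * LLop M1 = M2 := by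
  rw [twoLL]
  simp only [M1, M1c0, M1c1, M2, M2c0, M2c1, M2c2, M2c3, M2c4, map_sub, map_add, pderiv_mul, pderiv_pow, pderiv_X_apply,
    pderiv_C, pderiv_ofNat', map_neg, Fin.reduceEq, reduceIte, mul_zero, zero_mul,
    mul_one, one_mul, add_zero, zero_add, sub_zero, zero_sub, mul_neg, neg_neg, if_true]
  ring

set_option maxHeartbeats 4000000 in
lemma step3 : 2 * LLop M2 = M3 := by
  rw [twoLL]
  simp only [M2, M2c0, M2c1, M2c2, M2c3, M2c4, M3, M3c0, M3c1, M3c2, M3c3, M3c4, M3c5, map_sub, map_add, pderiv_mul, pderiv_pow, pderiv_X_apply,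
    pderiv_C, pderiv_ofNat', map_neg, Fin.reduceEq, reduceIte, mul_zero, zero_mul,
    mul_one, one_mul, add_zero, zero_add, sub_zero, zero_sub, mul_neg, neg_neg, if_true]
  ring

set_option maxHeartbeats 4000000 in
lemma step4 : 2 * LLop M3 = M4 := by
  rw [twoLL]
  simp only [M3, M3c0, M3c1, M3c2, M3c3, M3c4, M3c5, M4, M4c0, M4c1, M4c2, M4c3, M4c4, map_sub, map_add, pderiv_mul, pderiv_pow, pderiv_X_apply,
    pderiv_C, pderiv_ofNat', map_neg, Fin.reduceEq, reduceIte, mul_zero, zero_mul,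
    mul_one, one_mul, add_zero, zero_add, sub_zero, zero_sub, mul_neg, neg_neg, if_true]
  ring



lemma LLop_two_mul (f : R14) : LLop (2 * f) = 2 * LLop f := by
  have hp : ∀ i : Fin 14, pderiv i (2 * f) = 2 * pderiv i f := by
    intro i
    rw [pderiv_mul, pderiv_ofNat', zero_mul, zero_add]
  unfold LLop L1op L2op
  simp only [hp]
  ring

lemma M4_eq : M4 = 16 * LLop (LLop (LLop (LLop QSinf.mu0P))) := by
  rw [show (16 : R14) * LLop (LLop (LLop (LLop QSinf.mu0P)))
      = 2 * LLop (2 * LLop (2 * LLop (2 * LLop QSinf.mu0P))) by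
    rw [LLop_two_mul, LLop_two_mul, LLop_two_mul, LLop_two_mul,
        LLop_two_mul, LLop_two_mul]; ring]
  rw [step1, step2, step3, step4]

end QSinfAux

/-- Every common (complex, possibly infinite) zero `(X₀,Y₀,Z₀)` of the
homogenizations `P` and `Q` satisfies `μ₄(a,X₀,Y₀) = 0`. -/
theorem mu4_vanishes_at_common_zeros (a : Fin 12 → ℝ) (X0 Y0 Z0 : ℂ)
    (hP : PfC a X0 Y0 Z0 = 0) (hQ : QfC a X0 Y0 Z0 = 0) :
    mufC 4 a X0 Y0 = 0 := by
  have hiter : LLop^[4] mu0P = LLop (LLop (LLop (LLop mu0P))) := by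
    simp [Function.iterate_succ_apply', -Function.iterate_succ]
  have h1 : aeval (evalAtC a X0 Y0) QSinfAux.M4
      = 16 * aeval (evalAtC a X0 Y0) (LLop (LLop (LLop (LLop mu0P)))) := by
    rw [QSinfAux.M4_eq, map_mul, map_ofNat]
  have hmu : mufC 4 a X0 Y0 = (1/384 : ℂ) * aeval (evalAtC a X0 Y0) QSinfAux.M4 := by
    rw [mufC, muP, hiter, map_smul, Complex.real_smul]
    have hfac : (((Nat.factorial 4 : ℝ)⁻¹ : ℝ) : ℂ) = 1/24 := by
      norm_num [Nat.factorial]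
    rw [hfac]
    linear_combination (-(1/384) : ℂ) * h1
  have e0 : evalAtC a X0 Y0 0 = ((a 0 : ℝ) : ℂ) := rfl
  have e1 : evalAtC a X0 Y0 1 = ((a 1 : ℝ) : ℂ) := rfl
  have e2 : evalAtC a X0 Y0 2 = ((a 2 : ℝ) : ℂ) := rfl
  have e3 : evalAtC a X0 Y0 3 = ((a 3 : ℝ) : ℂ) := rfl
  have e4 : evalAtC a X0 Y0 4 = ((a 4 : ℝ) : ℂ) := rfl
  have e5 : evalAtC a X0 Y0 5 = ((a 5 : ℝ) : ℂ) := rfl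
  have e6 : evalAtC a X0 Y0 6 = ((a 6 : ℝ) : ℂ) := rfl
  have e7 : evalAtC a X0 Y0 7 = ((a 7 : ℝ) : ℂ) := rfl
  have e8 : evalAtC a X0 Y0 8 = ((a 8 : ℝ) : ℂ) := rfl
  have e9 : evalAtC a X0 Y0 9 = ((a 9 : ℝ) : ℂ) := rfl
  have e10 : evalAtC a X0 Y0 10 = ((a 10 : ℝ) : ℂ) := rfl
  have e11 : evalAtC a X0 Y0 11 = ((a 11 : ℝ) : ℂ) := rfl
  have e12 : evalAtC a X0 Y0 12 = X0 := rfl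
  have e13 : evalAtC a X0 Y0 13 = Y0 := rfl
  have hV4 : aeval (evalAtC a X0 Y0) QSinfAux.M4
      = 384 * (((a 0 : ℂ) * ((a 9 : ℂ) * X0 ^ 2 + 2 * (a 10 : ℂ) * X0 * Y0 + (a 11 : ℂ) * Y0 ^ 2) - ((a 3 : ℂ) * X0 ^ 2 + 2 * (a 4 : ℂ) * X0 * Y0 + (a 5 : ℂ) * Y0 ^ 2) * (a 6 : ℂ)) ^ 2 - ((a 0 : ℂ) * ((a 7 : ℂ) * X0 + (a 8 : ℂ) * Y0) - ((a 1 : ℂ) * X0 + (a 2 : ℂ) * Y0) * (a 6 : ℂ)) * (((a 1 : ℂ) * X0 + (a 2 : ℂ) * Y0) * ((a 9 : ℂ) * X0 ^ 2 + 2 * (a 10 : ℂ) * X0 * Y0 + (a 11 : ℂ) * Y0 ^ 2) - ((a 3 : ℂ) * X0 ^ 2 + 2 * (a 4 : ℂ) * X0 * Y0 + (a 5 : ℂ) * Y0 ^ 2) * ((a 7 : ℂ) * X0 + (a 8 : ℂ) * Y0))) := by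
    simp only [QSinfAux.M4, QSinfAux.M4c0, QSinfAux.M4c1, QSinfAux.M4c2, QSinfAux.M4c3, QSinfAux.M4c4, map_add, map_sub, map_mul, map_neg, map_ofNat, map_pow, aeval_X,
      e0, e1, e2, e3, e4, e5, e6, e7, e8, e9, e10, e11, e12, e13]
    ring
  rw [hmu, hV4]
  unfold PfC at hP
  unfold QfC at hQ
  linear_combination (((a 6 : ℂ))^2 * (((a 3 : ℂ) * X0 ^ 2 + 2 * (a 4 : ℂ) * X0 * Y0 + (a 5 : ℂ) * Y0 ^ 2) - ((a 0 : ℂ) * Z0 ^ 2 + ((a 1 : ℂ) * X0 + (a 2 : ℂ) * Y0) * Z0)) - 2 * (a 0 : ℂ) * ((a 9 : ℂ) * X0 ^ 2 + 2 * (a 10 : ℂ) * X0 * Y0 + (a 11 : ℂ) * Y0 ^ 2) * (a 6 : ℂ) + ((a 0 : ℂ) * ((a 7 : ℂ) * X0 + (a 8 : ℂ) * Y0) - ((a 1 : ℂ) * X0 + (a 2 : ℂ) * Y0) * (a 6 : ℂ)) * ((a 7 : ℂ) * X0 + (a 8 : ℂ) * Y0)) * hP + (((a 0 : ℂ))^2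 * (((a 9 : ℂ) * X0 ^ 2 + 2 * (a 10 : ℂ) * X0 * Y0 + (a 11 : ℂ) * Y0 ^ 2) - ((a 6 : ℂ) * Z0 ^ 2 + ((a 7 : ℂ) * X0 + (a 8 : ℂ) * Y0) * Z0)) + 2 * (a 0 : ℂ) * ((a 0 : ℂ) * Z0 ^ 2 + ((a 1 : ℂ) * X0 + (a 2 : ℂ) * Y0) * Z0) * (a 6 : ℂ) - ((a 0 : ℂ) * ((a 7 : ℂ) * X0 + (a 8 : ℂ) * Y0) - ((a 1 : ℂ) * X0 + (a 2 : ℂ) * Y0) * (a 6 : ℂ)) * ((a 1 : ℂ) * X0 + (a 2 : ℂ) * Y0)) * hQ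
end QSinf
end
end

section
/- For every a ∈ ℝ^12, all α, β ∈ ℝ, and every s ∈ {1, 2, 3, 4}, the following translation formula holds identically in (x, y): μ_s(r_{α,β}(a), x, y) = μ_s(a, x, y) + Σ_{k=0}^{s−1} binom(4−k, s−k) · ξ^{s−k} · μ_k(a, x, y), where ξ = β·x − α·y and binom denotes the binomial coefficient. -/
open MvPolynomial Finset

noncomputable section

namespace QSinf

set_option maxHeartbeats 4000000
set_option maxRecDepth 10000

private def x0 : R14 := X 0
private def x1 : R14 := X 1
private def x2 : R14 := X 2
private def x3 : R14 := X 3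
private def x4 : R14 := X 4
private def x5 : R14 := X 5
private def x6 : R14 := X 6
private def x7 : R14 := X 7
private def x8 : R14 := X 8
private def x9 : R14 := X 9
private def x10 : R14 := X 10
private def x11 : R14 := X 11
private def x12 : R14 := X 12
private def x13 : R14 := X 13

lemma pd_ofNat (i : Fin 14) (n : ℕ) [n.AtLeastTwo] :
    pderiv i (OfNat.ofNat n : R14) = 0 := by
  rw [show (OfNat.ofNat n : R14) = C (OfNat.ofNat n : ℝ) from (map_ofNat C n).symm, pderiv_C]

private def Q1c0 : R14 := C (-2 : ℝ) * x5 ^ 2 * x7 * x9 * x13 + C (2 : ℝ) * x4 * x5 * x8 * x9 * x13 + C (4 : ℝ) * x4 * x5 * x7 * x10 * x13 + C (-2 : ℝ) * x4 * x5 * x7 * x9 * x12 + C (4 : ℝ) * x4 ^ 2 * x8 * x9 * x12 + C (-4 : ℝ) * x4 ^ 2 * x7 * x11 * x13 + C (-4 : ℝ) * x3 * x5 * x8 * x10 * x13 + C (-2 : ℝ) * x3 * x5 * x8 * x9 * x12 + C (2 : ℝ) * x3 * x5 * x7 * x11 * x13 + C (4 : ℝ) * x3 * x5 * x7 * x10 *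 x12 + C (2 : ℝ) * x3 * x4 * x8 * x11 * x13 + C (-4 : ℝ) * x3 * x4 * x8 * x10 * x12
private def Q1c1 : R14 := C (-2 : ℝ) * x3 * x4 * x7 * x11 * x12 + C (2 : ℝ) * x3 ^ 2 * x8 * x11 * x12 + C (2 : ℝ) * x2 * x5 * x9 * x10 * x13 + C (2 : ℝ) * x2 * x5 * x9 ^ 2 * x12 + C (-4 : ℝ) * x2 * x4 * x9 * x11 * x13 + C (-4 : ℝ) * x2 * x4 * x9 * x10 * x12 + C (2 : ℝ) * x2 * x3 * x10 * x11 * x13 + C (4 : ℝ) * x2 * x3 * x10 ^ 2 * x12 + C (-2 : ℝ) * x2 * x3 * x9 * x11 * x12 + C (-4 : ℝ) * x1 * x5 * x10 ^ 2 * x13 + C (2 : ℝ) * x1 * x5 * x9 * x11 * x13 + C (-2 : ℝ) * x1 * x5 * x9 * x10 * x12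
private def Q1c2 : R14 := C (4 : ℝ) * x1 * x4 * x10 * x11 * x13 + C (4 : ℝ) * x1 * x4 * x9 * x11 * x12 + C (-2 : ℝ) * x1 * x3 * x11 ^ 2 * x13 + C (-2 : ℝ) * x1 * x3 * x10 * x11 * x12
private def Q1P : R14 := Q1c0 + Q1c1 + Q1c2

private def Q2c0 : R14 := C (2 : ℝ) * x5 ^ 2 * x7 ^ 2 * x13 ^ 2 + C (4 : ℝ) * x5 ^ 2 * x6 * x9 * x13 ^ 2 + C (-4 : ℝ) * x4 * x5 * x7 * x8 * x13 ^ 2 + C (4 : ℝ) * x4 * x5 * x7 ^ 2 * x12 * x13 + C (-8 : ℝ) * x4 * x5 * x6 * x10 * x13 ^ 2 + C (8 : ℝ) * x4 * x5 * x6 * x9 * x12 * x13 + C (-8 : ℝ) * x4 ^ 2 * x7 * x8 * x12 * x13 + C (8 : ℝ) * x4 ^ 2 * x6 * x11 * x13 ^ 2 + C (8 : ℝ) * x4 ^ 2 * x6 * x9 * x12 ^ 2 + C (2 : ℝ) * x3 * x5 * x8 ^ 2 * x13 ^ 2 + C (2 : ℝ) * x3 * x5 * x7 ^ 2 * x12 ^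 2 + C (-4 : ℝ) * x3 * x5 * x6 * x11 * x13 ^ 2
private def Q2c1 : R14 := C (-16 : ℝ) * x3 * x5 * x6 * x10 * x12 * x13 + C (-4 : ℝ) * x3 * x5 * x6 * x9 * x12 ^ 2 + C (4 : ℝ) * x3 * x4 * x8 ^ 2 * x12 * x13 + C (-4 : ℝ) * x3 * x4 * x7 * x8 * x12 ^ 2 + C (8 : ℝ) * x3 * x4 * x6 * x11 * x12 * x13 + C (-8 : ℝ) * x3 * x4 * x6 * x10 * x12 ^ 2 + C (2 : ℝ) * x3 ^ 2 * x8 ^ 2 * x12 ^ 2 + C (4 : ℝ) * x3 ^ 2 * x6 * x11 * x12 ^ 2 + C (-2 : ℝ) * x2 * x5 * x8 * x9 * x13 ^ 2 + C (-4 : ℝ) * x2 * x5 * x7 * x10 * x13 ^ 2 + C (-6 : ℝ) * x2 * x5 * x7 * x9 * x12 * x13 + C (-4 : ℝ) * x2 * x4 * x8 * x9 * x12 * x13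
private def Q2c2 : R14 := C (8 : ℝ) * x2 * x4 * x7 * x11 * x13 ^ 2 + C (8 : ℝ) * x2 * x4 * x7 * x10 * x12 * x13 + C (-4 : ℝ) * x2 * x4 * x7 * x9 * x12 ^ 2 + C (-2 : ℝ) * x2 * x3 * x8 * x11 * x13 ^ 2 + C (-4 : ℝ) * x2 * x3 * x8 * x10 * x12 * x13 + C (-4 : ℝ) * x2 * x3 * x8 * x9 * x12 ^ 2 + C (6 : ℝ) * x2 * x3 * x7 * x11 * x12 * x13 + C (8 : ℝ) * x2 * x3 * x7 * x10 * x12 ^ 2 + C (2 : ℝ) * x2 ^ 2 * x9 * x11 * x13 ^ 2 + C (4 : ℝ) * x2 ^ 2 * x9 * x10 * x12 * x13 + C (2 : ℝ) * x2 ^ 2 * x9 ^ 2 * x12 ^ 2 + C (8 : ℝ) * x1 * x5 * x8 * x10 * x13 ^ 2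
private def Q2c3 : R14 := C (6 : ℝ) * x1 * x5 * x8 * x9 * x12 * x13 + C (-4 : ℝ) * x1 * x5 * x7 * x11 * x13 ^ 2 + C (-4 : ℝ) * x1 * x5 * x7 * x10 * x12 * x13 + C (-2 : ℝ) * x1 * x5 * x7 * x9 * x12 ^ 2 + C (-4 : ℝ) * x1 * x4 * x8 * x11 * x13 ^ 2 + C (8 : ℝ) * x1 * x4 * x8 * x10 * x12 * x13 + C (8 : ℝ) * x1 * x4 * x8 * x9 * x12 ^ 2 + C (-4 : ℝ) * x1 * x4 * x7 * x11 * x12 * x13 + C (-6 : ℝ) * x1 * x3 * x8 * x11 * x12 * x13 + C (-4 : ℝ) * x1 * x3 * x8 * x10 * x12 ^ 2 + C (-2 : ℝ) * x1 * x3 * x7 * x11 * x12 ^ 2 + C (-4 : ℝ) * x1 * x2 * x10 * x11 * x13 ^ 2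
private def Q2c4 : R14 := C (-8 : ℝ) * x1 * x2 * x10 ^ 2 * x12 * x13 + C (-4 : ℝ) * x1 * x2 * x9 * x10 * x12 ^ 2 + C (2 : ℝ) * x1 ^ 2 * x11 ^ 2 * x13 ^ 2 + C (4 : ℝ) * x1 ^ 2 * x10 * x11 * x12 * x13 + C (2 : ℝ) * x1 ^ 2 * x9 * x11 * x12 ^ 2 + C (8 : ℝ) * x0 * x5 * x10 ^ 2 * x13 ^ 2 + C (-4 : ℝ) * x0 * x5 * x9 * x11 * x13 ^ 2 + C (8 : ℝ) * x0 * x5 * x9 * x10 * x12 * x13 + C (4 : ℝ) * x0 * x5 * x9 ^ 2 * x12 ^ 2 + C (-8 : ℝ) * x0 * x4 * x10 * x11 * x13 ^ 2 + C (-16 : ℝ) * x0 * x4 * x9 * x11 * x12 * x13 + C (-8 : ℝ) * x0 * x4 * x9 * x10 * x12 ^ 2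
private def Q2c5 : R14 := C (4 : ℝ) * x0 * x3 * x11 ^ 2 * x13 ^ 2 + C (8 : ℝ) * x0 * x3 * x10 * x11 * x12 * x13 + C (8 : ℝ) * x0 * x3 * x10 ^ 2 * x12 ^ 2 + C (-4 : ℝ) * x0 * x3 * x9 * x11 * x12 ^ 2
private def Q2P : R14 := Q2c0 + Q2c1 + Q2c2 + Q2c3 + Q2c4 + Q2c5

private def Q3c0 : R14 := C (-12 : ℝ) * x5 ^ 2 * x6 * x7 * x13 ^ 3 + C (12 : ℝ) * x4 * x5 * x6 * x8 * x13 ^ 3 + C (-36 : ℝ) * x4 * x5 * x6 * x7 * x12 * x13 ^ 2 + C (24 : ℝ) * x4 ^ 2 * x6 * x8 * x12 * x13 ^ 2 + C (-24 : ℝ) * x4 ^ 2 * x6 * x7 * x12 ^ 2 * x13 + C (12 : ℝ) * x3 * x5 * x6 * x8 * x12 * x13 ^ 2 + C (-12 : ℝ) * x3 * x5 * x6 * x7 * x12 ^ 2 * x13 + C (36 : ℝ) * x3 * x4 * x6 * x8 * x12 ^ 2 * x13 + C (-12 : ℝ) * x3 * x4 * x6 * x7 * x12 ^ 3 + C (12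 : ℝ) * x3 ^ 2 * x6 * x8 * x12 ^ 3 + C (6 : ℝ) * x2 * x5 * x7 * x8 * x13 ^ 3 + C (6 : ℝ) * x2 * x5 * x7 ^ 2 * x12 * x13 ^ 2
private def Q3c1 : R14 := C (12 : ℝ) * x2 * x5 * x6 * x10 * x13 ^ 3 + C (12 : ℝ) * x2 * x5 * x6 * x9 * x12 * x13 ^ 2 + C (12 : ℝ) * x2 * x4 * x7 * x8 * x12 * x13 ^ 2 + C (12 : ℝ) * x2 * x4 * x7 ^ 2 * x12 ^ 2 * x13 + C (-24 : ℝ) * x2 * x4 * x6 * x11 * x13 ^ 3 + C (-24 : ℝ) * x2 * x4 * x6 * x10 * x12 * x13 ^ 2 + C (6 : ℝ) * x2 * x3 * x7 * x8 * x12 ^ 2 * x13 + C (6 : ℝ) * x2 * x3 * x7 ^ 2 * x12 ^ 3 + C (-24 : ℝ) * x2 * x3 * x6 * x11 * x12 * x13 ^ 2 + C (-36 : ℝ) * x2 * x3 * x6 * x10 * x12 ^ 2 * x13 + C (-12 : ℝ) * x2 * x3 * x6 * x9 * x12 ^ 3 + C (-6 : ℝ) * x2 ^ 2 * x7 * x11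 * x13 ^ 3
private def Q3c2 : R14 := C (-12 : ℝ) * x2 ^ 2 * x7 * x10 * x12 * x13 ^ 2 + C (-6 : ℝ) * x2 ^ 2 * x7 * x9 * x12 ^ 2 * x13 + C (-6 : ℝ) * x1 * x5 * x8 ^ 2 * x13 ^ 3 + C (-6 : ℝ) * x1 * x5 * x7 * x8 * x12 * x13 ^ 2 + C (12 : ℝ) * x1 * x5 * x6 * x11 * x13 ^ 3 + C (36 : ℝ) * x1 * x5 * x6 * x10 * x12 * x13 ^ 2 + C (24 : ℝ) * x1 * x5 * x6 * x9 * x12 ^ 2 * x13 + C (-12 : ℝ) * x1 * x4 * x8 ^ 2 * x12 * x13 ^ 2 + C (-12 : ℝ) * x1 * x4 * x7 * x8 * x12 ^ 2 * x13 + C (24 : ℝ) * x1 * x4 * x6 * x10 * x12 ^ 2 * x13 + C (24 : ℝ) * x1 * x4 * x6 * x9 * x12 ^ 3 + C (-6 : ℝ) * x1 * x3 * x8 ^ 2 * x12 ^ 2 * x13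
private def Q3c3 : R14 := C (-6 : ℝ) * x1 * x3 * x7 * x8 * x12 ^ 3 + C (-12 : ℝ) * x1 * x3 * x6 * x11 * x12 ^ 2 * x13 + C (-12 : ℝ) * x1 * x3 * x6 * x10 * x12 ^ 3 + C (6 : ℝ) * x1 * x2 * x8 * x11 * x13 ^ 3 + C (12 : ℝ) * x1 * x2 * x8 * x10 * x12 * x13 ^ 2 + C (6 : ℝ) * x1 * x2 * x8 * x9 * x12 ^ 2 * x13 + C (-6 : ℝ) * x1 * x2 * x7 * x11 * x12 * x13 ^ 2 + C (-12 : ℝ) * x1 * x2 * x7 * x10 * x12 ^ 2 * x13 + C (-6 : ℝ) * x1 * x2 * x7 * x9 * x12 ^ 3 + C (6 : ℝ) * x1 ^ 2 * x8 * x11 * x12 * x13 ^ 2 + C (12 : ℝ) * x1 ^ 2 * x8 * x10 * x12 ^ 2 * x13 + C (6 : ℝ) * x1 ^ 2 * x8 * x9 * x12 ^ 3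
private def Q3c4 : R14 := C (-24 : ℝ) * x0 * x5 * x8 * x10 * x13 ^ 3 + C (-24 : ℝ) * x0 * x5 * x8 * x9 * x12 * x13 ^ 2 + C (12 : ℝ) * x0 * x5 * x7 * x11 * x13 ^ 3 + C (-12 : ℝ) * x0 * x5 * x7 * x9 * x12 ^ 2 * x13 + C (12 : ℝ) * x0 * x4 * x8 * x11 * x13 ^ 3 + C (-24 : ℝ) * x0 * x4 * x8 * x10 * x12 * x13 ^ 2 + C (-36 : ℝ) * x0 * x4 * x8 * x9 * x12 ^ 2 * x13 + C (36 : ℝ) * x0 * x4 * x7 * x11 * x12 * x13 ^ 2 + C (24 : ℝ) * x0 * x4 * x7 * x10 * x12 ^ 2 * x13 + C (-12 : ℝ) * x0 * x4 * x7 * x9 * x12 ^ 3 + C (12 : ℝ) * x0 * x3 * x8 * x11 * x12 * x13 ^ 2 + C (-12 : ℝ) * x0 * x3 * x8 * x9 * x12 ^ 3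
private def Q3c5 : R14 := C (24 : ℝ) * x0 * x3 * x7 * x11 * x12 ^ 2 * x13 + C (24 : ℝ) * x0 * x3 * x7 * x10 * x12 ^ 3 + C (12 : ℝ) * x0 * x2 * x10 * x11 * x13 ^ 3 + C (24 : ℝ) * x0 * x2 * x10 ^ 2 * x12 * x13 ^ 2 + C (12 : ℝ) * x0 * x2 * x9 * x11 * x12 * x13 ^ 2 + C (36 : ℝ) * x0 * x2 * x9 * x10 * x12 ^ 2 * x13 + C (12 : ℝ) * x0 * x2 * x9 ^ 2 * x12 ^ 3 + C (-12 : ℝ) * x0 * x1 * x11 ^ 2 * x13 ^ 3 + C (-36 : ℝ) * x0 * x1 * x10 * x11 * x12 * x13 ^ 2 + C (-24 : ℝ) * x0 * x1 * x10 ^ 2 * x12 ^ 2 * x13 + C (-12 : ℝ) * x0 * x1 * x9 * x11 * x12 ^ 2 * x13 + C (-12 : ℝ) * x0 * x1 * x9 * x10 * x12 ^ 3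
private def Q3P : R14 := Q3c0 + Q3c1 + Q3c2 + Q3c3 + Q3c4 + Q3c5

private def Q4c0 : R14 := C (24 : ℝ) * x5 ^ 2 * x6 ^ 2 * x13 ^ 4 + C (96 : ℝ) * x4 * x5 * x6 ^ 2 * x12 * x13 ^ 3 + C (96 : ℝ) * x4 ^ 2 * x6 ^ 2 * x12 ^ 2 * x13 ^ 2 + C (48 : ℝ) * x3 * x5 * x6 ^ 2 * x12 ^ 2 * x13 ^ 2 + C (96 : ℝ) * x3 * x4 * x6 ^ 2 * x12 ^ 3 * x13 + C (24 : ℝ) * x3 ^ 2 * x6 ^ 2 * x12 ^ 4 + C (-24 : ℝ) * x2 * x5 * x6 * x8 * x13 ^ 4 + C (-24 : ℝ) * x2 * x5 * x6 * x7 * x12 * x13 ^ 3 + C (-48 : ℝ) * x2 * x4 * x6 * x8 * x12 * x13 ^ 3 + C (-48 : ℝ) * x2 * x4 * x6 * x7 * x12 ^ 2 * x13 ^ 2 + C (-24 : ℝ) * x2 * x3 * x6 * x8 * x12 ^ 2 * x13 ^ 2 + C (-24 : ℝ) * x2 * x3 * x6 * x7 * x12 ^ 3 * x13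
private def Q4c1 : R14 := C (24 : ℝ) * x2 ^ 2 * x6 * x11 * x13 ^ 4 + C (48 : ℝ) * x2 ^ 2 * x6 * x10 * x12 * x13 ^ 3 + C (24 : ℝ) * x2 ^ 2 * x6 * x9 * x12 ^ 2 * x13 ^ 2 + C (-24 : ℝ) * x1 * x5 * x6 * x8 * x12 * x13 ^ 3 + C (-24 : ℝ) * x1 * x5 * x6 * x7 * x12 ^ 2 * x13 ^ 2 + C (-48 : ℝ) * x1 * x4 * x6 * x8 * x12 ^ 2 * x13 ^ 2 + C (-48 : ℝ) * x1 * x4 * x6 * x7 * x12 ^ 3 * x13 + C (-24 : ℝ) * x1 * x3 * x6 * x8 * x12 ^ 3 * x13 + C (-24 : ℝ) * x1 * x3 * x6 * x7 * x12 ^ 4 + C (48 : ℝ) * x1 * x2 * x6 * x11 * x12 * x13 ^ 3 + C (96 : ℝ) * x1 * x2 * x6 * x10 * x12 ^ 2 * x13 ^ 2 + C (48 : ℝ) * x1 * x2 * x6 * x9 * x12 ^ 3 * x13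
private def Q4c2 : R14 := C (24 : ℝ) * x1 ^ 2 * x6 * x11 * x12 ^ 2 * x13 ^ 2 + C (48 : ℝ) * x1 ^ 2 * x6 * x10 * x12 ^ 3 * x13 + C (24 : ℝ) * x1 ^ 2 * x6 * x9 * x12 ^ 4 + C (24 : ℝ) * x0 * x5 * x8 ^ 2 * x13 ^ 4 + C (48 : ℝ) * x0 * x5 * x7 * x8 * x12 * x13 ^ 3 + C (24 : ℝ) * x0 * x5 * x7 ^ 2 * x12 ^ 2 * x13 ^ 2 + C (-48 : ℝ) * x0 * x5 * x6 * x11 * x13 ^ 4 + C (-96 : ℝ) * x0 * x5 * x6 * x10 * x12 * x13 ^ 3 + C (-48 : ℝ) * x0 * x5 * x6 * x9 * x12 ^ 2 * x13 ^ 2 + C (48 : ℝ) * x0 * x4 * x8 ^ 2 * x12 * x13 ^ 3 + C (96 : ℝ) * x0 * x4 * x7 * x8 * x12 ^ 2 * x13 ^ 2 + C (48 : ℝ) * x0 * x4 * x7 ^ 2 * x12 ^ 3 * x13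
private def Q4c3 : R14 := C (-96 : ℝ) * x0 * x4 * x6 * x11 * x12 * x13 ^ 3 + C (-192 : ℝ) * x0 * x4 * x6 * x10 * x12 ^ 2 * x13 ^ 2 + C (-96 : ℝ) * x0 * x4 * x6 * x9 * x12 ^ 3 * x13 + C (24 : ℝ) * x0 * x3 * x8 ^ 2 * x12 ^ 2 * x13 ^ 2 + C (48 : ℝ) * x0 * x3 * x7 * x8 * x12 ^ 3 * x13 + C (24 : ℝ) * x0 * x3 * x7 ^ 2 * x12 ^ 4 + C (-48 : ℝ) * x0 * x3 * x6 * x11 * x12 ^ 2 * x13 ^ 2 + C (-96 : ℝ) * x0 * x3 * x6 * x10 * x12 ^ 3 * x13 + C (-48 : ℝ) * x0 * x3 * x6 * x9 * x12 ^ 4 + C (-24 : ℝ) * x0 * x2 * x8 * x11 * x13 ^ 4 + C (-48 : ℝ) * x0 * x2 * x8 * x10 * x12 * x13 ^ 3 + C (-24 : ℝ) * x0 * x2 * x8 * x9 * x12 ^ 2 * x13 ^ 2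
private def Q4c4 : R14 := C (-24 : ℝ) * x0 * x2 * x7 * x11 * x12 * x13 ^ 3 + C (-48 : ℝ) * x0 * x2 * x7 * x10 * x12 ^ 2 * x13 ^ 2 + C (-24 : ℝ) * x0 * x2 * x7 * x9 * x12 ^ 3 * x13 + C (-24 : ℝ) * x0 * x1 * x8 * x11 * x12 * x13 ^ 3 + C (-48 : ℝ) * x0 * x1 * x8 * x10 * x12 ^ 2 * x13 ^ 2 + C (-24 : ℝ) * x0 * x1 * x8 * x9 * x12 ^ 3 * x13 + C (-24 : ℝ) * x0 * x1 * x7 * x11 * x12 ^ 2 * x13 ^ 2 + C (-48 : ℝ) * x0 * x1 * x7 * x10 * x12 ^ 3 * x13 + C (-24 : ℝ) * x0 * x1 * x7 * x9 * x12 ^ 4 + C (24 : ℝ) * x0 ^ 2 * x11 ^ 2 * x13 ^ 4 + C (96 : ℝ) * x0 ^ 2 * x10 * x11 * x12 * x13 ^ 3 + C (96 : ℝ) * x0 ^ 2 * x10 ^ 2 * x12 ^ 2 * x13 ^ 2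
private def Q4c5 : R14 := C (48 : ℝ) * x0 ^ 2 * x9 * x11 * x12 ^ 2 * x13 ^ 2 + C (96 : ℝ) * x0 ^ 2 * x9 * x10 * x12 ^ 3 * x13 + C (24 : ℝ) * x0 ^ 2 * x9 ^ 2 * x12 ^ 4
private def Q4P : R14 := Q4c0 + Q4c1 + Q4c2 + Q4c3 + Q4c4 + Q4c5

lemma eA0 (a : Fin 12 → ℝ) (x y : ℝ) : evalAt a x y 0 = a 0 := rfl
lemma eA1 (a : Fin 12 → ℝ) (x y : ℝ) : evalAt a x y 1 = a 1 := rfl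
lemma eA2 (a : Fin 12 → ℝ) (x y : ℝ) : evalAt a x y 2 = a 2 := rfl
lemma eA3 (a : Fin 12 → ℝ) (x y : ℝ) : evalAt a x y 3 = a 3 := rfl
lemma eA4 (a : Fin 12 → ℝ) (x y : ℝ) : evalAt a x y 4 = a 4 := rfl
lemma eA5 (a : Fin 12 → ℝ) (x y : ℝ) : evalAt a x y 5 = a 5 := rfl
lemma eA6 (a : Fin 12 → ℝ) (x y : ℝ) : evalAt a x y 6 = a 6 := rfl
lemma eA7 (a : Fin 12 → ℝ) (x y : ℝ) : evalAt a x y 7 = a 7 := rfl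
lemma eA8 (a : Fin 12 → ℝ) (x y : ℝ) : evalAt a x y 8 = a 8 := rfl
lemma eA9 (a : Fin 12 → ℝ) (x y : ℝ) : evalAt a x y 9 = a 9 := rfl
lemma eA10 (a : Fin 12 → ℝ) (x y : ℝ) : evalAt a x y 10 = a 10 := rfl
lemma eA11 (a : Fin 12 → ℝ) (x y : ℝ) : evalAt a x y 11 = a 11 := rfl
lemma eA12 (a : Fin 12 → ℝ) (x y : ℝ) : evalAt a x y 12 = x := rfl
lemma eA13 (a : Fin 12 → ℝ) (x y : ℝ) : evalAt a x y 13 = y := rfl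

private def mu0C : R14 :=
    C (1:ℝ) * x3 ^ 2 * x11 ^ 2 + C (-2:ℝ) * x3 * x5 * x9 * x11 + C (1:ℝ) * x5 ^ 2 * x9 ^ 2
    + C (-4:ℝ) * x3 * x4 * x10 * x11 + C (4:ℝ) * x3 * x5 * x10 ^ 2
    + C (4:ℝ) * x4 ^ 2 * x9 * x11 + C (-4:ℝ) * x4 * x5 * x9 * x10

lemma hmu0 : mu0P = mu0C := by
  apply MvPolynomial.funext; intro z
  simp only [mu0P, mu0C, x3, x4, x5, x9, x10, x11, map_add, map_sub, map_mul, map_neg, map_pow,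
    map_ofNat, eval_X, eval_C, map_one]
  ring

lemma hQ1 : LLop mu0C = Q1P := by
  apply MvPolynomial.funext; intro z
  simp only [LLop, L1op, L2op, mu0C, Q1c0, Q1c1, Q1c2, Q1P, x0, x1, x2, x3, x4, x5, x6, x7, x8, x9, x10, x11, x12, x13, map_add, map_sub, map_neg, pderiv_mul, pderiv_pow, pd_ofNat, pderiv_C, pderiv_X, Pi.single_apply, Fin.reduceEq, reduceIte, mul_zero, zero_mul, mul_one, one_mul, add_zero, zero_add, neg_zero]
  simp only [map_add, map_sub, map_mul, map_neg, map_pow, map_ofNat, map_natCast, Nat.cast_ofNat, Nat.cast_one, eval_X, eval_C, map_one]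
  ring
lemma hQ2 : LLop Q1P = Q2P := by
  apply MvPolynomial.funext; intro z
  simp only [LLop, L1op, L2op, mu0C, Q1c0, Q1c1, Q1c2, Q1P, Q2c0, Q2c1, Q2c2, Q2c3, Q2c4, Q2c5, Q2P, x0, x1, x2, x3, x4, x5, x6, x7, x8, x9, x10, x11, x12, x13, map_add, map_sub, map_neg, pderiv_mul, pderiv_pow, pd_ofNat, pderiv_C, pderiv_X, Pi.single_apply, Fin.reduceEq, reduceIte, mul_zero, zero_mul, mul_one, one_mul, add_zero, zero_add, neg_zero]
  simp only [map_add, map_sub, map_mul, map_neg, map_pow, map_ofNat, map_natCast, Nat.cast_ofNat, Nat.cast_one, eval_X, eval_C, map_one]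
  ring
lemma hQ3 : LLop Q2P = Q3P := by
  apply MvPolynomial.funext; intro z
  simp only [LLop, L1op, L2op, mu0C, Q2c0, Q2c1, Q2c2, Q2c3, Q2c4, Q2c5, Q2P, Q3c0, Q3c1, Q3c2, Q3c3, Q3c4, Q3c5, Q3P, x0, x1, x2, x3, x4, x5, x6, x7, x8, x9, x10, x11, x12, x13, map_add, map_sub, map_neg, pderiv_mul, pderiv_pow, pd_ofNat, pderiv_C, pderiv_X, Pi.single_apply, Fin.reduceEq, reduceIte, mul_zero, zero_mul, mul_one, one_mul, add_zero, zero_add, neg_zero]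
  simp only [map_add, map_sub, map_mul, map_neg, map_pow, map_ofNat, map_natCast, Nat.cast_ofNat, Nat.cast_one, eval_X, eval_C, map_one]
  ring
lemma hQ4 : LLop Q3P = Q4P := by
  apply MvPolynomial.funext; intro z
  simp only [LLop, L1op, L2op, mu0C, Q3c0, Q3c1, Q3c2, Q3c3, Q3c4, Q3c5, Q3P, Q4c0, Q4c1, Q4c2, Q4c3, Q4c4, Q4c5, Q4P, x0, x1, x2, x3, x4, x5, x6, x7, x8, x9, x10, x11, x12, x13, map_add, map_sub, map_neg, pderiv_mul, pderiv_pow, pd_ofNat, pderiv_C, pderiv_X, Pi.single_apply, Fin.reduceEq, reduceIte, mul_zero, zero_mul, mul_one, one_mul, add_zero, zero_add, neg_zero]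
  simp only [map_add, map_sub, map_mul, map_neg, map_pow, map_ofNat, map_natCast, Nat.cast_ofNat, Nat.cast_one, eval_X, eval_C, map_one]
  ring

lemma muf0_eval (b : Fin 12 → ℝ) (x y : ℝ) :
    muf 0 b x y =
      (b 3 * b 11 - b 5 * b 9) ^ 2 - 4 * (b 3 * b 10 - b 4 * b 9) * (b 4 * b 11 - b 5 * b 10) := by
  simp only [muf, muP, Nat.factorial_zero, Nat.cast_one, inv_one, one_smul,
    Function.iterate_zero, id_eq, mu0P]
  simp only [map_add, map_sub, map_mul, map_pow, map_ofNat, eval_X, eval_C,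
    eA3, eA4, eA5, eA9, eA10, eA11]
private def E1c0 (b : Fin 12 → ℝ) (x y : ℝ) : ℝ := (-2) * b 5 ^ 2 * b 7 * b 9 * y + (2) * b 4 * b 5 * b 8 * b 9 * y + (4) * b 4 * b 5 * b 7 * b 10 * y + (-2) * b 4 * b 5 * b 7 * b 9 * x + (4) * b 4 ^ 2 * b 8 * b 9 * x + (-4) * b 4 ^ 2 * b 7 * b 11 * y + (-4) * b 3 * b 5 * b 8 * b 10 * y + (-2) * b 3 * b 5 * b 8 * b 9 * x + (2) * b 3 * b 5 * b 7 * b 11 * y + (4) * b 3 * b 5 * b 7 * b 10 * x + (2) * b 3 * b 4 * b 8 * b 11 * y + (-4) * b 3 * b 4 * b 8 * b 10 * x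
private def E1c1 (b : Fin 12 → ℝ) (x y : ℝ) : ℝ := (-2) * b 3 * b 4 * b 7 * b 11 * x + (2) * b 3 ^ 2 * b 8 * b 11 * x + (2) * b 2 * b 5 * b 9 * b 10 * y + (2) * b 2 * b 5 * b 9 ^ 2 * x + (-4) * b 2 * b 4 * b 9 * b 11 * y + (-4) * b 2 * b 4 * b 9 * b 10 * x + (2) * b 2 * b 3 * b 10 * b 11 * y + (4) * b 2 * b 3 * b 10 ^ 2 * x + (-2) * b 2 * b 3 * b 9 * b 11 * x + (-4) * b 1 * b 5 * b 10 ^ 2 * y + (2) * b 1 * b 5 * b 9 * b 11 * y + (-2) * b 1 * b 5 * b 9 * b 10 * x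
private def E1c2 (b : Fin 12 → ℝ) (x y : ℝ) : ℝ := (4) * b 1 * b 4 * b 10 * b 11 * y + (4) * b 1 * b 4 * b 9 * b 11 * x + (-2) * b 1 * b 3 * b 11 ^ 2 * y + (-2) * b 1 * b 3 * b 10 * b 11 * x
private def E2c0 (b : Fin 12 → ℝ) (x y : ℝ) : ℝ := (2) * b 5 ^ 2 * b 7 ^ 2 * y ^ 2 + (4) * b 5 ^ 2 * b 6 * b 9 * y ^ 2 + (-4) * b 4 * b 5 * b 7 * b 8 * y ^ 2 + (4) * b 4 * b 5 * b 7 ^ 2 * x * y + (-8) * b 4 * b 5 * b 6 * b 10 * y ^ 2 + (8) * b 4 * b 5 * b 6 * b 9 * x * y + (-8) * b 4 ^ 2 * b 7 * b 8 * x * y + (8) * b 4 ^ 2 * b 6 * b 11 * y ^ 2 + (8) * b 4 ^ 2 * b 6 * b 9 * x ^ 2 + (2) * b 3 * b 5 * b 8 ^ 2 * y ^ 2 + (2) * b 3 * b 5 * b 7 ^ 2 * x ^ 2 + (-4) * b 3 * b 5 * b 6 * b 11 * y ^ 2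
private def E2c1 (b : Fin 12 → ℝ) (x y : ℝ) : ℝ := (-16) * b 3 * b 5 * b 6 * b 10 * x * y + (-4) * b 3 * b 5 * b 6 * b 9 * x ^ 2 + (4) * b 3 * b 4 * b 8 ^ 2 * x * y + (-4) * b 3 * b 4 * b 7 * b 8 * x ^ 2 + (8) * b 3 * b 4 * b 6 * b 11 * x * y + (-8) * b 3 * b 4 * b 6 * b 10 * x ^ 2 + (2) * b 3 ^ 2 * b 8 ^ 2 * x ^ 2 + (4) * b 3 ^ 2 * b 6 * b 11 * x ^ 2 + (-2) * b 2 * b 5 * b 8 * b 9 * y ^ 2 + (-4) * b 2 * b 5 * b 7 * b 10 * y ^ 2 + (-6) * b 2 * b 5 * b 7 * b 9 * x * y + (-4) * b 2 * b 4 * b 8 * b 9 * x * y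
private def E2c2 (b : Fin 12 → ℝ) (x y : ℝ) : ℝ := (8) * b 2 * b 4 * b 7 * b 11 * y ^ 2 + (8) * b 2 * b 4 * b 7 * b 10 * x * y + (-4) * b 2 * b 4 * b 7 * b 9 * x ^ 2 + (-2) * b 2 * b 3 * b 8 * b 11 * y ^ 2 + (-4) * b 2 * b 3 * b 8 * b 10 * x * y + (-4) * b 2 * b 3 * b 8 * b 9 * x ^ 2 + (6) * b 2 * b 3 * b 7 * b 11 * x * y + (8) * b 2 * b 3 * b 7 * b 10 * x ^ 2 + (2) * b 2 ^ 2 * b 9 * b 11 * y ^ 2 + (4) * b 2 ^ 2 * b 9 * b 10 * x * y + (2) * b 2 ^ 2 * b 9 ^ 2 * x ^ 2 + (8) * b 1 * b 5 * b 8 * b 10 * y ^ 2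
private def E2c3 (b : Fin 12 → ℝ) (x y : ℝ) : ℝ := (6) * b 1 * b 5 * b 8 * b 9 * x * y + (-4) * b 1 * b 5 * b 7 * b 11 * y ^ 2 + (-4) * b 1 * b 5 * b 7 * b 10 * x * y + (-2) * b 1 * b 5 * b 7 * b 9 * x ^ 2 + (-4) * b 1 * b 4 * b 8 * b 11 * y ^ 2 + (8) * b 1 * b 4 * b 8 * b 10 * x * y + (8) * b 1 * b 4 * b 8 * b 9 * x ^ 2 + (-4) * b 1 * b 4 * b 7 * b 11 * x * y + (-6) * b 1 * b 3 * b 8 * b 11 * x * y + (-4) * b 1 * b 3 * b 8 * b 10 * x ^ 2 + (-2) * b 1 * b 3 * b 7 * b 11 * x ^ 2 + (-4) * b 1 * b 2 * b 10 * b 11 * y ^ 2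
private def E2c4 (b : Fin 12 → ℝ) (x y : ℝ) : ℝ := (-8) * b 1 * b 2 * b 10 ^ 2 * x * y + (-4) * b 1 * b 2 * b 9 * b 10 * x ^ 2 + (2) * b 1 ^ 2 * b 11 ^ 2 * y ^ 2 + (4) * b 1 ^ 2 * b 10 * b 11 * x * y + (2) * b 1 ^ 2 * b 9 * b 11 * x ^ 2 + (8) * b 0 * b 5 * b 10 ^ 2 * y ^ 2 + (-4) * b 0 * b 5 * b 9 * b 11 * y ^ 2 + (8) * b 0 * b 5 * b 9 * b 10 * x * y + (4) * b 0 * b 5 * b 9 ^ 2 * x ^ 2 + (-8) * b 0 * b 4 * b 10 * b 11 * y ^ 2 + (-16) * b 0 * b 4 * b 9 * b 11 * x * y + (-8) * b 0 * b 4 * b 9 * b 10 * x ^ 2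
private def E2c5 (b : Fin 12 → ℝ) (x y : ℝ) : ℝ := (4) * b 0 * b 3 * b 11 ^ 2 * y ^ 2 + (8) * b 0 * b 3 * b 10 * b 11 * x * y + (8) * b 0 * b 3 * b 10 ^ 2 * x ^ 2 + (-4) * b 0 * b 3 * b 9 * b 11 * x ^ 2
private def E3c0 (b : Fin 12 → ℝ) (x y : ℝ) : ℝ := (-12) * b 5 ^ 2 * b 6 * b 7 * y ^ 3 + (12) * b 4 * b 5 * b 6 * b 8 * y ^ 3 + (-36) * b 4 * b 5 * b 6 * b 7 * x * y ^ 2 + (24) * b 4 ^ 2 * b 6 * b 8 * x * y ^ 2 + (-24) * b 4 ^ 2 * b 6 * b 7 * x ^ 2 * y + (12) * b 3 * b 5 * b 6 * b 8 * x * y ^ 2 + (-12) * b 3 * b 5 * b 6 * b 7 * x ^ 2 * y + (36) * b 3 * b 4 * b 6 * b 8 * x ^ 2 * y + (-12) * b 3 * b 4 * b 6 * b 7 * x ^ 3 + (12) * b 3 ^ 2 * b 6 * b 8 * x ^ 3 + (6) * b 2 * b 5 * b 7 * b 8 * y ^ 3 + (6) * b 2 * b 5 * b 7 ^ 2 * x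 * y ^ 2
private def E3c1 (b : Fin 12 → ℝ) (x y : ℝ) : ℝ := (12) * b 2 * b 5 * b 6 * b 10 * y ^ 3 + (12) * b 2 * b 5 * b 6 * b 9 * x * y ^ 2 + (12) * b 2 * b 4 * b 7 * b 8 * x * y ^ 2 + (12) * b 2 * b 4 * b 7 ^ 2 * x ^ 2 * y + (-24) * b 2 * b 4 * b 6 * b 11 * y ^ 3 + (-24) * b 2 * b 4 * b 6 * b 10 * x * y ^ 2 + (6) * b 2 * b 3 * b 7 * b 8 * x ^ 2 * y + (6) * b 2 * b 3 * b 7 ^ 2 * x ^ 3 + (-24) * b 2 * b 3 * b 6 * b 11 * x * y ^ 2 + (-36) * b 2 * b 3 * b 6 * b 10 * x ^ 2 * y + (-12) * b 2 * b 3 * b 6 * b 9 * x ^ 3 + (-6) * b 2 ^ 2 * b 7 * b 11 * y ^ 3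
private def E3c2 (b : Fin 12 → ℝ) (x y : ℝ) : ℝ := (-12) * b 2 ^ 2 * b 7 * b 10 * x * y ^ 2 + (-6) * b 2 ^ 2 * b 7 * b 9 * x ^ 2 * y + (-6) * b 1 * b 5 * b 8 ^ 2 * y ^ 3 + (-6) * b 1 * b 5 * b 7 * b 8 * x * y ^ 2 + (12) * b 1 * b 5 * b 6 * b 11 * y ^ 3 + (36) * b 1 * b 5 * b 6 * b 10 * x * y ^ 2 + (24) * b 1 * b 5 * b 6 * b 9 * x ^ 2 * y + (-12) * b 1 * b 4 * b 8 ^ 2 * x * y ^ 2 + (-12) * b 1 * b 4 * b 7 * b 8 * x ^ 2 * y + (24) * b 1 * b 4 * b 6 * b 10 * x ^ 2 * y + (24) * b 1 * b 4 * b 6 * b 9 * x ^ 3 + (-6) * b 1 * b 3 * b 8 ^ 2 * x ^ 2 * y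
private def E3c3 (b : Fin 12 → ℝ) (x y : ℝ) : ℝ := (-6) * b 1 * b 3 * b 7 * b 8 * x ^ 3 + (-12) * b 1 * b 3 * b 6 * b 11 * x ^ 2 * y + (-12) * b 1 * b 3 * b 6 * b 10 * x ^ 3 + (6) * b 1 * b 2 * b 8 * b 11 * y ^ 3 + (12) * b 1 * b 2 * b 8 * b 10 * x * y ^ 2 + (6) * b 1 * b 2 * b 8 * b 9 * x ^ 2 * y + (-6) * b 1 * b 2 * b 7 * b 11 * x * y ^ 2 + (-12) * b 1 * b 2 * b 7 * b 10 * x ^ 2 * y + (-6) * b 1 * b 2 * b 7 * b 9 * x ^ 3 + (6) * b 1 ^ 2 * b 8 * b 11 * x * y ^ 2 + (12) * b 1 ^ 2 * b 8 * b 10 * x ^ 2 * y + (6) * b 1 ^ 2 * b 8 * b 9 * x ^ 3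
private def E3c4 (b : Fin 12 → ℝ) (x y : ℝ) : ℝ := (-24) * b 0 * b 5 * b 8 * b 10 * y ^ 3 + (-24) * b 0 * b 5 * b 8 * b 9 * x * y ^ 2 + (12) * b 0 * b 5 * b 7 * b 11 * y ^ 3 + (-12) * b 0 * b 5 * b 7 * b 9 * x ^ 2 * y + (12) * b 0 * b 4 * b 8 * b 11 * y ^ 3 + (-24) * b 0 * b 4 * b 8 * b 10 * x * y ^ 2 + (-36) * b 0 * b 4 * b 8 * b 9 * x ^ 2 * y + (36) * b 0 * b 4 * b 7 * b 11 * x * y ^ 2 + (24) * b 0 * b 4 * b 7 * b 10 * x ^ 2 * y + (-12) * b 0 * b 4 * b 7 * b 9 * x ^ 3 + (12) * b 0 * b 3 * b 8 * b 11 * x * y ^ 2 + (-12) * b 0 * b 3 * b 8 * b 9 * x ^ 3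
private def E3c5 (b : Fin 12 → ℝ) (x y : ℝ) : ℝ := (24) * b 0 * b 3 * b 7 * b 11 * x ^ 2 * y + (24) * b 0 * b 3 * b 7 * b 10 * x ^ 3 + (12) * b 0 * b 2 * b 10 * b 11 * y ^ 3 + (24) * b 0 * b 2 * b 10 ^ 2 * x * y ^ 2 + (12) * b 0 * b 2 * b 9 * b 11 * x * y ^ 2 + (36) * b 0 * b 2 * b 9 * b 10 * x ^ 2 * y + (12) * b 0 * b 2 * b 9 ^ 2 * x ^ 3 + (-12) * b 0 * b 1 * b 11 ^ 2 * y ^ 3 + (-36) * b 0 * b 1 * b 10 * b 11 * x * y ^ 2 + (-24) * b 0 * b 1 * b 10 ^ 2 * x ^ 2 * y + (-12) * b 0 * b 1 * b 9 * b 11 * x ^ 2 * y + (-12) * b 0 * b 1 * b 9 * b 10 * x ^ 3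
private def E4c0 (b : Fin 12 → ℝ) (x y : ℝ) : ℝ := (24) * b 5 ^ 2 * b 6 ^ 2 * y ^ 4 + (96) * b 4 * b 5 * b 6 ^ 2 * x * y ^ 3 + (96) * b 4 ^ 2 * b 6 ^ 2 * x ^ 2 * y ^ 2 + (48) * b 3 * b 5 * b 6 ^ 2 * x ^ 2 * y ^ 2 + (96) * b 3 * b 4 * b 6 ^ 2 * x ^ 3 * y + (24) * b 3 ^ 2 * b 6 ^ 2 * x ^ 4 + (-24) * b 2 * b 5 * b 6 * b 8 * y ^ 4 + (-24) * b 2 * b 5 * b 6 * b 7 * x * y ^ 3 + (-48) * b 2 * b 4 * b 6 * b 8 * x * y ^ 3 + (-48) * b 2 * b 4 * b 6 * b 7 * x ^ 2 * y ^ 2 + (-24) * b 2 * b 3 * b 6 * b 8 * x ^ 2 * y ^ 2 + (-24) * b 2 * b 3 * b 6 * b 7 * x ^ 3 * y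
private def E4c1 (b : Fin 12 → ℝ) (x y : ℝ) : ℝ := (24) * b 2 ^ 2 * b 6 * b 11 * y ^ 4 + (48) * b 2 ^ 2 * b 6 * b 10 * x * y ^ 3 + (24) * b 2 ^ 2 * b 6 * b 9 * x ^ 2 * y ^ 2 + (-24) * b 1 * b 5 * b 6 * b 8 * x * y ^ 3 + (-24) * b 1 * b 5 * b 6 * b 7 * x ^ 2 * y ^ 2 + (-48) * b 1 * b 4 * b 6 * b 8 * x ^ 2 * y ^ 2 + (-48) * b 1 * b 4 * b 6 * b 7 * x ^ 3 * y + (-24) * b 1 * b 3 * b 6 * b 8 * x ^ 3 * y + (-24) * b 1 * b 3 * b 6 * b 7 * x ^ 4 + (48) * b 1 * b 2 * b 6 * b 11 * x * y ^ 3 + (96) * b 1 * b 2 * b 6 * b 10 * x ^ 2 * y ^ 2 + (48) * b 1 * b 2 * b 6 * b 9 * x ^ 3 * y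
private def E4c2 (b : Fin 12 → ℝ) (x y : ℝ) : ℝ := (24) * b 1 ^ 2 * b 6 * b 11 * x ^ 2 * y ^ 2 + (48) * b 1 ^ 2 * b 6 * b 10 * x ^ 3 * y + (24) * b 1 ^ 2 * b 6 * b 9 * x ^ 4 + (24) * b 0 * b 5 * b 8 ^ 2 * y ^ 4 + (48) * b 0 * b 5 * b 7 * b 8 * x * y ^ 3 + (24) * b 0 * b 5 * b 7 ^ 2 * x ^ 2 * y ^ 2 + (-48) * b 0 * b 5 * b 6 * b 11 * y ^ 4 + (-96) * b 0 * b 5 * b 6 * b 10 * x * y ^ 3 + (-48) * b 0 * b 5 * b 6 * b 9 * x ^ 2 * y ^ 2 + (48) * b 0 * b 4 * b 8 ^ 2 * x * y ^ 3 + (96) * b 0 * b 4 * b 7 * b 8 * x ^ 2 * y ^ 2 + (48) * b 0 * b 4 * b 7 ^ 2 * x ^ 3 * y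
private def E4c3 (b : Fin 12 → ℝ) (x y : ℝ) : ℝ := (-96) * b 0 * b 4 * b 6 * b 11 * x * y ^ 3 + (-192) * b 0 * b 4 * b 6 * b 10 * x ^ 2 * y ^ 2 + (-96) * b 0 * b 4 * b 6 * b 9 * x ^ 3 * y + (24) * b 0 * b 3 * b 8 ^ 2 * x ^ 2 * y ^ 2 + (48) * b 0 * b 3 * b 7 * b 8 * x ^ 3 * y + (24) * b 0 * b 3 * b 7 ^ 2 * x ^ 4 + (-48) * b 0 * b 3 * b 6 * b 11 * x ^ 2 * y ^ 2 + (-96) * b 0 * b 3 * b 6 * b 10 * x ^ 3 * y + (-48) * b 0 * b 3 * b 6 * b 9 * x ^ 4 + (-24) * b 0 * b 2 * b 8 * b 11 * y ^ 4 + (-48) * b 0 * b 2 * b 8 * b 10 * x * y ^ 3 + (-24) * b 0 * b 2 * b 8 * b 9 * x ^ 2 * y ^ 2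
private def E4c4 (b : Fin 12 → ℝ) (x y : ℝ) : ℝ := (-24) * b 0 * b 2 * b 7 * b 11 * x * y ^ 3 + (-48) * b 0 * b 2 * b 7 * b 10 * x ^ 2 * y ^ 2 + (-24) * b 0 * b 2 * b 7 * b 9 * x ^ 3 * y + (-24) * b 0 * b 1 * b 8 * b 11 * x * y ^ 3 + (-48) * b 0 * b 1 * b 8 * b 10 * x ^ 2 * y ^ 2 + (-24) * b 0 * b 1 * b 8 * b 9 * x ^ 3 * y + (-24) * b 0 * b 1 * b 7 * b 11 * x ^ 2 * y ^ 2 + (-48) * b 0 * b 1 * b 7 * b 10 * x ^ 3 * y + (-24) * b 0 * b 1 * b 7 * b 9 * x ^ 4 + (24) * b 0 ^ 2 * b 11 ^ 2 * y ^ 4 + (96) * b 0 ^ 2 * b 10 * b 11 * x * y ^ 3 + (96) * b 0 ^ 2 * b 10 ^ 2 * x ^ 2 * y ^ 2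
private def E4c5 (b : Fin 12 → ℝ) (x y : ℝ) : ℝ := (48) * b 0 ^ 2 * b 9 * b 11 * x ^ 2 * y ^ 2 + (96) * b 0 ^ 2 * b 9 * b 10 * x ^ 3 * y + (24) * b 0 ^ 2 * b 9 ^ 2 * x ^ 4
lemma hit1 : LLop^[1] mu0P = Q1P := by rw [Function.iterate_one, hmu0, hQ1]
lemma muf1_eval (b : Fin 12 → ℝ) (x y : ℝ) :
    muf 1 b x y = (1/1 : ℝ) * (E1c0 b x y + E1c1 b x y + E1c2 b x y) := by
  have hfac : ((Nat.factorial 1 : ℕ) : ℝ) = 1 := by norm_num [Nat.factorial]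
  simp only [muf, muP, hit1, smul_eval, Q1c0, Q1c1, Q1c2, Q1P, x0, x1, x2, x3, x4, x5, x6, x7, x8, x9, x10, x11, x12, x13, E1c0, E1c1, E1c2]
  simp only [map_add, map_sub, map_mul, map_neg, map_pow, map_ofNat, map_natCast, Nat.cast_ofNat, Nat.cast_one, eval_X, eval_C, map_one, eA0, eA1, eA2, eA3, eA4, eA5, eA6, eA7, eA8, eA9, eA10, eA11, eA12, eA13]
  rw [hfac]
  ring
lemma hit2 : LLop^[2] mu0P = Q2P := by
  rw [show (2:ℕ) = 1+1 from rfl, Function.iterate_succ_apply', hit1, hQ2]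
lemma muf2_eval (b : Fin 12 → ℝ) (x y : ℝ) :
    muf 2 b x y = (1/2 : ℝ) * (E2c0 b x y + E2c1 b x y + E2c2 b x y + E2c3 b x y + E2c4 b x y + E2c5 b x y) := by
  have hfac : ((Nat.factorial 2 : ℕ) : ℝ) = 2 := by norm_num [Nat.factorial]
  simp only [muf, muP, hit2, smul_eval, Q2c0, Q2c1, Q2c2, Q2c3, Q2c4, Q2c5, Q2P, x0, x1, x2, x3, x4, x5, x6, x7, x8, x9, x10, x11, x12, x13, E2c0, E2c1, E2c2, E2c3, E2c4, E2c5]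
  simp only [map_add, map_sub, map_mul, map_neg, map_pow, map_ofNat, map_natCast, Nat.cast_ofNat, Nat.cast_one, eval_X, eval_C, map_one, eA0, eA1, eA2, eA3, eA4, eA5, eA6, eA7, eA8, eA9, eA10, eA11, eA12, eA13]
  rw [hfac]
  ring
lemma hit3 : LLop^[3] mu0P = Q3P := by
  rw [show (3:ℕ) = 2+1 from rfl, Function.iterate_succ_apply', hit2, hQ3]
lemma muf3_eval (b : Fin 12 → ℝ) (x y : ℝ) :
    muf 3 b x y = (1/6 : ℝ) * (E3c0 b x y + E3c1 b x y + E3c2 b x y + E3c3 b x y + E3c4 b x y + E3c5 b x y) := by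
  have hfac : ((Nat.factorial 3 : ℕ) : ℝ) = 6 := by norm_num [Nat.factorial]
  simp only [muf, muP, hit3, smul_eval, Q3c0, Q3c1, Q3c2, Q3c3, Q3c4, Q3c5, Q3P, x0, x1, x2, x3, x4, x5, x6, x7, x8, x9, x10, x11, x12, x13, E3c0, E3c1, E3c2, E3c3, E3c4, E3c5]
  simp only [map_add, map_sub, map_mul, map_neg, map_pow, map_ofNat, map_natCast, Nat.cast_ofNat, Nat.cast_one, eval_X, eval_C, map_one, eA0, eA1, eA2, eA3, eA4, eA5, eA6, eA7, eA8, eA9, eA10, eA11, eA12, eA13]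
  rw [hfac]
  ring
lemma hit4 : LLop^[4] mu0P = Q4P := by
  rw [show (4:ℕ) = 3+1 from rfl, Function.iterate_succ_apply', hit3, hQ4]
lemma muf4_eval (b : Fin 12 → ℝ) (x y : ℝ) :
    muf 4 b x y = (1/24 : ℝ) * (E4c0 b x y + E4c1 b x y + E4c2 b x y + E4c3 b x y + E4c4 b x y + E4c5 b x y) := by
  have hfac : ((Nat.factorial 4 : ℕ) : ℝ) = 24 := by norm_num [Nat.factorial]
  simp only [muf, muP, hit4, smul_eval, Q4c0, Q4c1, Q4c2, Q4c3, Q4c4, Q4c5, Q4P, x0, x1, x2, x3, x4, x5, x6, x7, x8, x9, x10, x11, x12, x13, E4c0, E4c1, E4c2, E4c3, E4c4, E4c5]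
  simp only [map_add, map_sub, map_mul, map_neg, map_pow, map_ofNat, map_natCast, Nat.cast_ofNat, Nat.cast_one, eval_X, eval_C, map_one, eA0, eA1, eA2, eA3, eA4, eA5, eA6, eA7, eA8, eA9, eA10, eA11, eA12, eA13]
  rw [hfac]
  ring

lemma rTv0 (a : Fin 12 → ℝ) (α β : ℝ) : rT a α β 0 = a 0 + a 1 * α + a 2 * β + a 3 * α ^ 2 + 2 * a 4 * α * β + a 5 * β ^ 2 := rfl
lemma rTv1 (a : Fin 12 → ℝ) (α β : ℝ) : rT a α β 1 = a 1 + 2 * a 3 * α + 2 * a 4 * β := rfl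
lemma rTv2 (a : Fin 12 → ℝ) (α β : ℝ) : rT a α β 2 = a 2 + 2 * a 4 * α + 2 * a 5 * β := rfl
lemma rTv3 (a : Fin 12 → ℝ) (α β : ℝ) : rT a α β 3 = a 3 := rfl
lemma rTv4 (a : Fin 12 → ℝ) (α β : ℝ) : rT a α β 4 = a 4 := rfl
lemma rTv5 (a : Fin 12 → ℝ) (α β : ℝ) : rT a α β 5 = a 5 := rfl
lemma rTv6 (a : Fin 12 → ℝ) (α β : ℝ) : rT a α β 6 = a 6 + a 7 * α + a 8 * β + a 9 * α ^ 2 + 2 * a 10 * α * β + a 11 * β ^ 2 := rfl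
lemma rTv7 (a : Fin 12 → ℝ) (α β : ℝ) : rT a α β 7 = a 7 + 2 * a 9 * α + 2 * a 10 * β := rfl
lemma rTv8 (a : Fin 12 → ℝ) (α β : ℝ) : rT a α β 8 = a 8 + 2 * a 10 * α + 2 * a 11 * β := rfl
lemma rTv9 (a : Fin 12 → ℝ) (α β : ℝ) : rT a α β 9 = a 9 := rfl
lemma rTv10 (a : Fin 12 → ℝ) (α β : ℝ) : rT a α β 10 = a 10 := rfl
lemma rTv11 (a : Fin 12 → ℝ) (α β : ℝ) : rT a α β 11 = a 11 := rfl


/-- the translation formula for the comitants `μ₁,…,μ₄`: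
`μ_s(r_{α,β}(a),x,y) = μ_s(a,x,y) + Σ_{k<s} C(4-k, s-k)·ξ^{s-k}·μ_k(a,x,y)`
with `ξ = β·x - α·y`. -/
theorem mu_translation_formula (a : Fin 12 → ℝ) (α β : ℝ) (s : ℕ)
    (hs1 : 1 ≤ s) (hs4 : s ≤ 4) (x y : ℝ) :
    muf s (rT a α β) x y =
      muf s a x y + ∑ k ∈ Finset.range s,
        ((4 - k).choose (s - k) : ℝ) * (β * x - α * y) ^ (s - k) * muf k a x y := by
  interval_cases s
  · simp only [Finset.sum_range_succ, Finset.sum_range_zero, Nat.reduceSub, show ((4:ℕ).choose 1) = 4 from rfl, show ((4:ℕ).choose 2) = 6 from rfl, show ((4:ℕ).choose 3) = 4 from rfl, show ((4:ℕ).choose 4) = 1 from rfl, show ((3:ℕ).choose 1) = 3 from rfl, show ((3:ℕ).choose 2) = 3 from rfl, show ((3:ℕ).choose 3) = 1 from rfl, show ((2:ℕ).choose 1) = 2 from rfl, show ((2:ℕ).choose 2) = 1 from rfl, show ((1:ℕ).choose 1) = 1 from rfl,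
      Nat.cast_ofNat, Nat.cast_one, muf1_eval, muf0_eval, rTv0, rTv1, rTv2, rTv3, rTv4, rTv5, rTv6, rTv7, rTv8, rTv9, rTv10, rTv11, E1c0, E1c1, E1c2]
    ring
  · simp only [Finset.sum_range_succ, Finset.sum_range_zero, Nat.reduceSub, show ((4:ℕ).choose 1) = 4 from rfl, show ((4:ℕ).choose 2) = 6 from rfl, show ((4:ℕ).choose 3) = 4 from rfl, show ((4:ℕ).choose 4) = 1 from rfl, show ((3:ℕ).choose 1) = 3 from rfl, show ((3:ℕ).choose 2) = 3 from rfl, show ((3:ℕ).choose 3) = 1 from rfl, show ((2:ℕ).choose 1) = 2 from rfl, show ((2:ℕ).choose 2) = 1 from rfl, show ((1:ℕ).choose 1) = 1 from rfl,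
      Nat.cast_ofNat, Nat.cast_one, muf2_eval, muf1_eval, muf0_eval, rTv0, rTv1, rTv2, rTv3, rTv4, rTv5, rTv6, rTv7, rTv8, rTv9, rTv10, rTv11, E1c0, E1c1, E1c2, E2c0, E2c1, E2c2, E2c3, E2c4, E2c5]
    ring
  · simp only [Finset.sum_range_succ, Finset.sum_range_zero, Nat.reduceSub, show ((4:ℕ).choose 1) = 4 from rfl, show ((4:ℕ).choose 2) = 6 from rfl, show ((4:ℕ).choose 3) = 4 from rfl, show ((4:ℕ).choose 4) = 1 from rfl, show ((3:ℕ).choose 1) = 3 from rfl, show ((3:ℕ).choose 2) = 3 from rfl, show ((3:ℕ).choose 3) = 1 from rfl, show ((2:ℕ).choose 1) = 2 from rfl, show ((2:ℕ).choose 2) = 1 from rfl, show ((1:ℕ).choose 1) = 1 from rfl,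
      Nat.cast_ofNat, Nat.cast_one, muf3_eval, muf2_eval, muf1_eval, muf0_eval, rTv0, rTv1, rTv2, rTv3, rTv4, rTv5, rTv6, rTv7, rTv8, rTv9, rTv10, rTv11, E1c0, E1c1, E1c2, E2c0, E2c1, E2c2, E2c3, E2c4, E2c5, E3c0, E3c1, E3c2, E3c3, E3c4, E3c5]
    ring
  · simp only [Finset.sum_range_succ, Finset.sum_range_zero, Nat.reduceSub, show ((4:ℕ).choose 1) = 4 from rfl, show ((4:ℕ).choose 2) = 6 from rfl, show ((4:ℕ).choose 3) = 4 from rfl, show ((4:ℕ).choose 4) = 1 from rfl, show ((3:ℕ).choose 1) = 3 from rfl, show ((3:ℕ).choose 2) = 3 from rfl, show ((3:ℕ).choose 3) = 1 from rfl, show ((2:ℕ).choose 1) = 2 from rfl, show ((2:ℕ).choose 2) = 1 from rfl, show ((1:ℕ).choose 1) = 1 from rfl,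
      Nat.cast_ofNat, Nat.cast_one, muf4_eval, muf3_eval, muf2_eval, muf1_eval, muf0_eval, rTv0, rTv1, rTv2, rTv3, rTv4, rTv5, rTv6, rTv7, rTv8, rTv9, rTv10, rTv11, E1c0, E1c1, E1c2, E2c0, E2c1, E2c2, E2c3, E2c4, E2c5, E3c0, E3c1, E3c2, E3c3, E3c4, E3c5, E4c0, E4c1, E4c2, E4c3, E4c4, E4c5]
    ring
end QSinf
end
end

section
/- Let a ∈ ℝ^12 satisfy η(a) = 0 and κ(a) = 0. Then for all α, β ∈ ℝ, κ1(r_{α,β}(a)) = κ1(a); that is, κ1 is a conditional T-comitant (invariant under translations) modulo the vanishing of η and κ. -/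
open MvPolynomial Finset

noncomputable section

namespace QSinf

/-- auxiliary: a binary quadratic form from its three coefficients -/
def myquad (A B Cc : ℝ) : R2 := C A * X 0 * X 0 + C B * X 0 * X 1 + C Cc * X 1 * X 1

/-- value of the `x²` coefficient of `M` -/
def MAv (a : Fin 12 → ℝ) : ℝ := 24 * cc0 a * cc2 a - 8 * cc1 a * cc1 a
/-- value of the `xy` coefficient of `M` -/
def MBv (a : Fin 12 → ℝ) : ℝ := 72 * cc0 a * cc3 a - 8 * cc1 a * cc2 a
/-- value of the `y²` coefficient of `M` -/
def MCv (a : Fin 12 → ℝ) : ℝ := 24 * cc1 a * cc3 a - 8 * cc2 a * cc2 a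
/-- the scalar value of the invariant κ -/
def kval (a : Fin 12 → ℝ) : ℝ :=
  4 * MAv a * (4 * (a 4 * a 11 - a 5 * a 10)) - 2 * MBv a * (4 * (a 3 * a 11 - a 5 * a 9))
    + 4 * MCv a * (4 * (a 3 * a 10 - a 4 * a 9))
/-- the scalar value of the invariant κ₁ -/
def k1val (a : Fin 12 → ℝ) : ℝ :=
  4 * MAv a * (a 2) - 2 * MBv a * (a 1 - a 8) + 4 * MCv a * (-(a 7))
/-- rate of change of κ₁ in the `α` direction -/
def tuv (a : Fin 12 → ℝ) : ℝ :=
  4 * MAv a * (2 * a 4) - 2 * MBv a * (2 * a 3 - 2 * a 10) + 4 * MCv a * (-(2 * a 9))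
/-- rate of change of κ₁ in the `β` direction -/
def tvv (a : Fin 12 → ℝ) : ℝ :=
  4 * MAv a * (2 * a 5) - 2 * MBv a * (2 * a 4 - 2 * a 11) + 4 * MCv a * (-(2 * a 10))

set_option maxHeartbeats 1000000 in
lemma transv2_myquad (A B Cc A' B' C' : ℝ) :
    transv2 (myquad A B Cc) (myquad A' B' C') = C (4*A*C' - 2*B*B' + 4*Cc*A') := by
  simp only [transv2, myquad, pdx, pdy, map_add, pderiv_mul, pderiv_C, pderiv_X,
    Pi.single_eq_same, Pi.single_eq_of_ne (by decide : (0:Fin 2) ≠ 1),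
    Pi.single_eq_of_ne (by decide : (1:Fin 2) ≠ 0), map_sub, map_mul, map_ofNat,
    mul_zero, zero_mul, mul_one, one_mul, add_zero, zero_add, map_zero]
  ring

set_option maxHeartbeats 1000000 in
lemma MP_myquad (a : Fin 12 → ℝ) : MP a = myquad (MAv a) (MBv a) (MCv a) := by
  simp only [MP, C2P, p2P, q2P, myquad, pdx, pdy, pow_two, map_add, map_sub, pderiv_mul,
    pderiv_C, pderiv_X,
    Pi.single_eq_same, Pi.single_eq_of_ne (by decide : (0:Fin 2) ≠ 1),
    Pi.single_eq_of_ne (by decide : (1:Fin 2) ≠ 0),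
    mul_zero, zero_mul, mul_one, one_mul, add_zero, zero_add, map_zero, sub_zero, zero_sub]
  simp only [MAv, MBv, MCv, cc0, cc1, cc2, cc3, map_sub, map_mul, map_add, map_neg, map_ofNat]
  ring

set_option maxHeartbeats 1000000 in
lemma KP_myquad (a : Fin 12 → ℝ) : KP a = myquad (4 * (a 3 * a 10 - a 4 * a 9))
    (4 * (a 3 * a 11 - a 5 * a 9)) (4 * (a 4 * a 11 - a 5 * a 10)) := by
  simp only [KP, jacobP, p2P, q2P, myquad, pdx, pdy, pow_two, map_add, pderiv_mul, pderiv_C,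
    pderiv_X, Pi.single_eq_same, Pi.single_eq_of_ne (by decide : (0:Fin 2) ≠ 1),
    Pi.single_eq_of_ne (by decide : (1:Fin 2) ≠ 0),
    mul_zero, zero_mul, mul_one, one_mul, add_zero, zero_add, map_zero, sub_zero, zero_sub]
  simp only [map_sub, map_mul, map_add, map_neg, map_ofNat]
  ring

lemma C1P_myquad (a : Fin 12 → ℝ) : C1P a = myquad (-(a 7)) (a 1 - a 8) (a 2) := by
  simp only [C1P, p1P, q1P, myquad, map_sub, map_neg]
  ring

lemma kappaP_eq (a : Fin 12 → ℝ) : kappaP a = C (kval a) := by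
  rw [kappaP, MP_myquad, KP_myquad, transv2_myquad]
  simp only [kval]

lemma kappa1P_eq (a : Fin 12 → ℝ) : kappa1P a = C (k1val a) := by
  rw [kappa1P, MP_myquad, C1P_myquad, transv2_myquad]
  simp only [k1val]

lemma tuv_sq (a : Fin 12 → ℝ) : tuv a ^ 2 =
    (-64 * (a 10)^2 + 48 * a 9 * a 11 - 96 * a 4 * a 9 + 64 * a 3 * a 10 - 16 * (a 3)^2)
      * kval a
    + (1024 * (a 10)^2 - 1024 * a 9 * a 11 + 2048 * a 4 * a 9 - 2048 * a 3 * a 10) * etaf a := by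
  simp only [tuv, kval, etaf, MAv, MBv, MCv, cc0, cc1, cc2, cc3]
  ring

lemma tvv_sq (a : Fin 12 → ℝ) : tvv a ^ 2 =
    (-16 * (a 11)^2 - 96 * a 5 * a 10 + 64 * a 4 * a 11 - 64 * (a 4)^2 + 48 * a 3 * a 5)
      * kval a
    + (2048 * a 5 * a 10 - 2048 * a 4 * a 11 + 1024 * (a 4)^2 - 1024 * a 3 * a 5) * etaf a := by
  simp only [tvv, kval, etaf, MAv, MBv, MCv, cc0, cc1, cc2, cc3]
  ring

/-- `κ₁` is a conditional T-comitant modulo `⟨η, κ⟩`: if `η(a) = 0` and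
`κ(a) = 0` then `κ₁` is invariant under all translations. -/
theorem kappa1_CT_comitant (a : Fin 12 → ℝ) (h1 : etaf a = 0) (h2 : kappaP a = 0)
    (α β : ℝ) :
    kappa1P (rT a α β) = kappa1P a := by
  have hk : kval a = 0 := by
    have h := kappaP_eq a
    rw [h2] at h
    exact (MvPolynomial.C_eq_zero.mp h.symm)
  have htu : tuv a = 0 := by
    have h := tuv_sq a
    rw [hk, h1, mul_zero, mul_zero, add_zero] at h
    exact pow_eq_zero_iff (n := 2) (by norm_num) |>.mp h
  have htv : tvv a = 0 := by
    have h := tvv_sq a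
    rw [hk, h1, mul_zero, mul_zero, add_zero] at h
    exact pow_eq_zero_iff (n := 2) (by norm_num) |>.mp h
  rw [kappa1P_eq, kappa1P_eq]
  congr 1
  have e1 : rT a α β 1 = a 1 + 2 * a 3 * α + 2 * a 4 * β := rfl
  have e2 : rT a α β 2 = a 2 + 2 * a 4 * α + 2 * a 5 * β := rfl
  have e3 : rT a α β 3 = a 3 := rfl
  have e4 : rT a α β 4 = a 4 := rfl
  have e5 : rT a α β 5 = a 5 := rfl
  have e7 : rT a α β 7 = a 7 + 2 * a 9 * α + 2 * a 10 * β := rfl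
  have e8 : rT a α β 8 = a 8 + 2 * a 10 * α + 2 * a 11 * β := rfl
  have e9 : rT a α β 9 = a 9 := rfl
  have e10 : rT a α β 10 = a 10 := rfl
  have e11 : rT a α β 11 = a 11 := rfl
  simp only [k1val, tuv, tvv, MAv, MBv, MCv, cc0, cc1, cc2, cc3, e1, e2, e3, e4, e5, e7, e8,
    e9, e10, e11] at htu htv ⊢
  linear_combination α * htu + β * htv
end QSinf
end
end

section
/- Let a ∈ ℝ^12 satisfy η(a) = 0, κ(a) = 0, L(a,x,y) identically zero, and K1(a,x,y) identically zero. Then for all α, β ∈ ℝ, κ2(r_{α,β}(a)) = κ2(a); that is, κ2 is a conditional T-comitant (invariant under translations) modulo the vanishing of η, κ, L and K1. -/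
open MvPolynomial Finset

noncomputable section

namespace QSinf

lemma pderiv_two (i : Fin 2) : pderiv i (2 : R2) = 0 := by
  rw [show (2 : R2) = C 2 from (map_ofNat C 2).symm, pderiv_C]

set_option maxHeartbeats 1600000 in
/-- `κ₂` is a conditional T-comitant modulo `⟨η, κ, L, K₁⟩`: if `η(a) = 0`,
`κ(a) = 0`, `L ≡ 0` and `K₁ ≡ 0` then `κ₂` is invariant under all translations. -/
theorem kappa2_CT_comitant (a : Fin 12 → ℝ) (h1 : etaf a = 0) (h2 : kappaP a = 0)
    (h3 : LP a = 0) (h4 : K1P a = 0) (α β : ℝ) :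
    kappa2f (rT a α β) = kappa2f a := by
  -- Step 1: extract the coefficient equations of `L ≡ 0` by evaluating at (1,0),(0,1),(1,1)
  have h10 := congrArg (eval ![(1:ℝ),0]) h3
  have h01 := congrArg (eval ![(0:ℝ),1]) h3
  have h11 := congrArg (eval ![(1:ℝ),1]) h3
  simp only [LP, KP, MP, HP, C2P, p2P, q2P, jacobP, pdx, pdy, map_add, map_sub, map_mul,
    map_neg, map_pow, map_ofNat, Derivation.leibniz, pderiv_X, pderiv_C, pderiv_two,
    smul_eq_mul, Pi.single_apply, eval_add, eval_sub, eval_mul, eval_pow, eval_C, eval_X,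
    eval_zero, map_zero] at h10 h01 h11
  norm_num [Matrix.cons_val_zero, Matrix.cons_val_one, Matrix.head_cons] at h10 h01 h11
  simp only [pderiv_two, map_zero] at h10 h01 h11
  norm_num at h10 h01 h11
  have E1 : (a 3)^2 - 3*(a 3)*(a 10) + 6*(a 10)^2 + 5*(a 4)*(a 9) - 5*(a 9)*(a 11) = 0 := by
    linear_combination (1/8 : ℝ) * h10
  have E3 : 6*(a 4)^2 - 3*(a 4)*(a 11) + (a 11)^2 + 5*(a 5)*(a 10) - 5*(a 3)*(a 5) = 0 := by
    linear_combination (1/8 : ℝ) * h01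
  have E2 : 2*(a 3)*(a 4) + 2*(a 3)*(a 11) - 8*(a 4)*(a 10) + 2*(a 10)*(a 11)
      + 10*(a 5)*(a 9) = 0 := by
    linear_combination (1/8 : ℝ) * h11 - (1/8 : ℝ) * h10 - (1/8 : ℝ) * h01
  -- Step 2: the SOS identity forces the two key relations
  have hQ : ((a 3 + a 10)*(a 4 + a 11) + (5/2)*(a 4 * a 10 - a 3 * a 11))^2
      + (15/4)*(a 4 * a 10 - a 3 * a 11)^2 = 0 := by
    linear_combination
      ((a 4 + a 11)^2 + (5/2)*(a 4 + a 11)*(a 4 - a 11) + (5/2)*(a 4 - a 11)^2) * E1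
      - ((5/2)*(a 3 - a 10)*(a 4 - a 11)) * E2 - (5*(a 9)*(a 4 - a 11)) * E3
  have hw : a 4 * a 10 - a 3 * a 11 = 0 := by
    nlinarith [hQ, sq_nonneg ((a 3 + a 10)*(a 4 + a 11) + (5/2)*(a 4 * a 10 - a 3 * a 11)),
      sq_nonneg (a 4 * a 10 - a 3 * a 11)]
  have hst : (a 3 + a 10) * (a 4 + a 11) = 0 := by
    nlinarith [hQ, hw, sq_nonneg ((a 3 + a 10)*(a 4 + a 11))]
  have hkey : a 3 + a 10 = 0 ∧ a 4 + a 11 = 0 := by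
    rcases mul_eq_zero.mp hst with hs0 | ht0
    · refine ⟨hs0, ?_⟩
      have htv1 : (a 4 + a 11) * (a 3 - a 10) = 0 := by
        linear_combination (a 4 - a 11) * hs0 - 2 * hw
      rcases mul_eq_zero.mp htv1 with ht0 | hv1
      · exact ht0
      · have E3' : 6*(a 4)^2 - 3*(a 4)*(a 11) + (a 11)^2 = 0 := by
          linear_combination E3 + 5*(a 5)*hv1
        have h4 : a 4 = 0 := by nlinarith [E3', sq_nonneg (2*(a 11) - 3*(a 4))]
        have h11' : a 11 = 0 := by nlinarith [E3', sq_nonneg (4*(a 4) - a 11)]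
        linarith
    · refine ⟨?_, ht0⟩
      have hsv2 : (a 3 + a 10) * (a 4 - a 11) = 0 := by
        linear_combination 2 * hw + (a 3 - a 10) * ht0
      rcases mul_eq_zero.mp hsv2 with hs0 | hv2
      · exact hs0
      · have E1' : (a 3)^2 - 3*(a 3)*(a 10) + 6*(a 10)^2 = 0 := by
          linear_combination E1 - 5*(a 9)*hv2
        have h10' : a 10 = 0 := by nlinarith [E1', sq_nonneg (2*(a 3) - 3*(a 10))]
        have h3' : a 3 = 0 := by nlinarith [E1', sq_nonneg (4*(a 10) - a 3)]
        linarith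
  obtain ⟨hs, ht⟩ := hkey
  -- Step 3: conclude, since `D₂ ≡ 0`
  have e0 : rT a α β 0 = a 0 + a 1 * α + a 2 * β + a 3 * α ^ 2 + 2 * a 4 * α * β
      + a 5 * β ^ 2 := rfl
  have e3 : rT a α β 3 = a 3 := rfl
  have e4 : rT a α β 4 = a 4 := rfl
  have e6 : rT a α β 6 = a 6 + a 7 * α + a 8 * β + a 9 * α ^ 2 + 2 * a 10 * α * β
      + a 11 * β ^ 2 := rfl
  have e10 : rT a α β 10 = a 10 := rfl
  have e11 : rT a α β 11 = a 11 := rfl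
  simp only [kappa2f, e0, e3, e4, e6, e10, e11]
  linear_combination (2 * (a 1 * α + a 2 * β + a 3 * α ^ 2 + 2 * a 4 * α * β + a 5 * β ^ 2)) * hs
    + (2 * (a 7 * α + a 8 * β + a 9 * α ^ 2 + 2 * a 10 * α * β + a 11 * β ^ 2)) * ht
end QSinf
end
end
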